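/- arXiv:1912.09089 — 3 statements merged into one kernel-verified Lean document; each statement's English description precedes it below -/
import Mathlib

section
/- Let q ≥ 3, n ≥ 2, and let S0 and S1 be disjoint nonempty q-ary codes of length n. Then the following are equivalent: (i) (S0, S1) is a spherical bitrade in H(n,q); (ii) d_{S0} = d_{S1} = 3 and χ_{S0} − χ_{S1} is a 0-eigenfunction of H(n,q); (iii) d_{S0} = d_{S1} = 3, d(S0, S1) = 2, and for each i ∈ {0,1} and each x ∈ S_i there are exactly (q−1)n/2 tuples of S_{1−i} at distance 2 from x. -/
open scoped BigOperators

/-- The ball of radius 1 centered at `x` in a graph `G`. -/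
def ball1 {V : Type*} (G : SimpleGraph V) (x : V) : Set V := {y | y = x ∨ G.Adj x y}

/-- A perfect one-error-correcting code: the balls of radius 1 centered at the
vertices of `C` partition the vertex set. -/
def IsPerfectCode {V : Type*} (G : SimpleGraph V) (C : Set V) : Prop :=
  ∀ x : V, ∃! c, c ∈ C ∧ c ∈ ball1 G x

/-- A perfect bitrade: a pair of disjoint nonempty vertex sets such that every ball of
radius 1 contains exactly one vertex of each, or none of either. -/
def IsPerfectBitrade {V : Type*} (G : SimpleGraph V) (T0 T1 : Set V) : Prop :=
  Disjoint T0 T1 ∧ T0.Nonempty ∧ T1.Nonempty ∧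
    ∀ x : V,
      ((∃! y, y ∈ T0 ∧ y ∈ ball1 G x) ∧ (∃! y, y ∈ T1 ∧ y ∈ ball1 G x)) ∨
        (∀ y, y ∈ T0 ∪ T1 → y ∉ ball1 G x)

/-- A spherical bitrade: a pair of disjoint nonempty vertex sets such that every sphere of
radius 1 contains exactly one vertex of each, or none of either. -/
def IsSphericalBitrade {V : Type*} (G : SimpleGraph V) (S0 S1 : Set V) : Prop :=
  Disjoint S0 S1 ∧ S0.Nonempty ∧ S1.Nonempty ∧
    ∀ x : V,
      ((∃! y, y ∈ S0 ∧ G.Adj x y) ∧ (∃! y, y ∈ S1 ∧ G.Adj x y)) ∨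
        (∀ y, y ∈ S0 ∪ S1 → ¬ G.Adj x y)

/-- The Hamming graph `H(n,q)`: vertices are `n`-tuples over an alphabet of size `q`,
adjacent iff they differ in exactly one coordinate. -/
def hammingGraph (n q : ℕ) : SimpleGraph (Fin n → Fin q) where
  Adj x y := hammingDist x y = 1
  symm := ⟨by intro x y h; rwa [hammingDist_comm]⟩
  loopless := ⟨by intro x h; simp [hammingDist_self] at h⟩

/-- `f` is a `μ`-eigenfunction of `G`: `f` is not identically zero and
`μ · f x = ∑_{y ∈ O(x)} f y` for every vertex `x`. -/
def IsEigenfun {V : Type*} (G : SimpleGraph V) (μ : ℝ) (f : V → ℝ) : Prop :=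
  f ≠ 0 ∧ ∀ x : V, μ * f x = ∑ᶠ y ∈ G.neighborSet x, f y

/-- The characteristic function of a set of vertices. -/
noncomputable def chi {V : Type*} (C : Set V) : V → ℝ := Set.indicator C 1

/-- The code `C` has minimum (graph) distance exactly `d`. -/
def HasMinDist {V : Type*} (G : SimpleGraph V) (C : Set V) (d : ℕ) : Prop :=
  (∀ x ∈ C, ∀ y ∈ C, x ≠ y → (d : ℕ∞) ≤ G.edist x y) ∧
    ∃ x ∈ C, ∃ y ∈ C, x ≠ y ∧ G.edist x y = d

/-- The code `C` of `n`-tuples has minimum Hamming distance exactly `d`. -/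
def HasMinHDist {n q : ℕ} (C : Set (Fin n → Fin q)) (d : ℕ) : Prop :=
  (∀ x ∈ C, ∀ y ∈ C, x ≠ y → d ≤ hammingDist x y) ∧
    ∃ x ∈ C, ∃ y ∈ C, x ≠ y ∧ hammingDist x y = d

/-- `G` is distance-regular with intersection numbers `p i j k`. -/
def IsDistRegular {V : Type*} (G : SimpleGraph V) (p : ℕ → ℕ → ℕ → ℕ) : Prop :=
  G.Connected ∧ ∀ (i j k : ℕ) (x y : V), G.edist x y = k →
    {z : V | G.edist x z = i ∧ G.edist z y = j}.ncard = p i j k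

open Finset Function

variable {n q : ℕ}

theorem hd_filter (x y : Fin n → Fin q) :
    hammingDist x y = (Finset.univ.filter (fun i => x i ≠ y i)).card := rfl

theorem hd_eq_one_iff {x y : Fin n → Fin q} :
    hammingDist x y = 1 ↔ ∃ i, x i ≠ y i ∧ ∀ j, j ≠ i → x j = y j := by
  rw [hd_filter, Finset.card_eq_one]
  constructor
  · rintro ⟨i, hi⟩
    refine ⟨i, ?_, fun j hj => ?_⟩
    · have : i ∈ Finset.univ.filter (fun i => x i ≠ y i) := hi ▸ Finset.mem_singleton_self i
      simpa using this
    · by_contra h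
      have : j ∈ Finset.univ.filter (fun i => x i ≠ y i) := by simpa using h
      rw [hi, Finset.mem_singleton] at this; exact hj this
  · rintro ⟨i, hi, hj⟩
    refine ⟨i, ?_⟩
    ext k
    simp only [Finset.mem_filter, Finset.mem_univ, true_and, Finset.mem_singleton]
    constructor
    · intro hk; by_contra h; exact hk (hj k h)
    · rintro rfl; exact hi

theorem hd_eq_two_iff {x y : Fin n → Fin q} :
    hammingDist x y = 2 ↔ ∃ i j, i ≠ j ∧ x i ≠ y i ∧ x j ≠ y j ∧
      ∀ k, k ≠ i → k ≠ j → x k = y k := by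
  rw [hd_filter, Finset.card_eq_two]
  constructor
  · rintro ⟨i, j, hij, h⟩
    have hi : i ∈ Finset.univ.filter (fun i => x i ≠ y i) := by rw [h]; simp
    have hjm : j ∈ Finset.univ.filter (fun i => x i ≠ y i) := by rw [h]; simp
    refine ⟨i, j, hij, by simpa using hi, by simpa using hjm, fun k hk1 hk2 => ?_⟩
    by_contra hc
    have : k ∈ Finset.univ.filter (fun i => x i ≠ y i) := by simpa using hc
    rw [h] at this; simp only [Finset.mem_insert, Finset.mem_singleton] at this
    tauto
  · rintro ⟨i, j, hij, hi, hj, hrest⟩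
    refine ⟨i, j, hij, ?_⟩
    ext k
    simp only [Finset.mem_filter, Finset.mem_univ, true_and, Finset.mem_insert,
      Finset.mem_singleton]
    constructor
    · intro hk; by_contra h; push_neg at h; exact hk (hrest k h.1 h.2)
    · rintro (rfl | rfl) <;> assumption

theorem exists_third (hq : 3 ≤ q) (a b : Fin q) : ∃ c, c ≠ a ∧ c ≠ b := by
  by_contra h
  push_neg at h
  have hsub : (Finset.univ : Finset (Fin q)) ⊆ {a, b} := by
    intro c _
    rcases eq_or_ne c a with rfl | hca
    · simp
    · simp [h c hca]
  have h1 := Finset.card_le_card hsub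
  have h2 : ({a, b} : Finset (Fin q)).card ≤ 2 := (Finset.card_insert_le _ _).trans (by simp)
  simp only [Finset.card_univ, Fintype.card_fin] at h1
  omega

/-- The neighborhood of `x` in the Hamming graph, as a Finset. -/
def nb (x : Fin n → Fin q) : Finset (Fin n → Fin q) :=
  Finset.univ.filter (fun z => hammingDist x z = 1)

theorem mem_nb {x z : Fin n → Fin q} : z ∈ nb x ↔ hammingDist x z = 1 := by
  simp [nb]

theorem hd_update {x : Fin n → Fin q} {i : Fin n} {a : Fin q} (ha : a ≠ x i) :
    hammingDist x (Function.update x i a) = 1 := by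
  rw [hd_eq_one_iff]
  exact ⟨i, by simp [ha.symm], fun j hj => by simp [Function.update_of_ne hj]⟩

theorem card_nb (x : Fin n → Fin q) : (nb x).card = (q - 1) * n := by
  classical
  set s : Finset ((i : Fin n) × Fin q) :=
    (Finset.univ : Finset (Fin n)).sigma (fun i => Finset.univ.erase (x i)) with hs
  have key : s.card = (nb x).card := by
    refine Finset.card_bij (fun p _ => Function.update x p.1 p.2) ?_ ?_ ?_
    · intro p hp
      simp only [hs, Finset.mem_sigma, Finset.mem_univ, Finset.mem_erase, true_and] at hp
      exact mem_nb.2 (hd_update hp.1)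
    · intro p hp p' hp' h
      simp only [hs, Finset.mem_sigma, Finset.mem_univ, Finset.mem_erase, true_and] at hp hp'
      obtain ⟨i, a⟩ := p
      obtain ⟨i', a'⟩ := p'
      rcases eq_or_ne i i' with rfl | hii
      · have : a = a' := by
          have h1 : Function.update x i a i = Function.update x i a' i := congrFun h i
          simpa using h1
        simp [this]
      · exfalso
        have h1 : Function.update x i a i = Function.update x i' a' i := congrFun h i
        rw [Function.update_of_ne hii] at h1
        simp only [Function.update_self] at h1; exact hp.1 h1
    · intro z hz
      rw [mem_nb, hd_eq_one_iff] at hz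
      obtain ⟨i, hi, hrest⟩ := hz
      refine ⟨⟨i, z i⟩, by simp [hs, Ne.symm hi], ?_⟩
      ext k
      rcases eq_or_ne k i with rfl | hki
      · simp
      · simp [Function.update_of_ne hki, hrest k hki]
  rw [← key, hs, Finset.card_sigma]
  simp [Finset.card_erase_of_mem, mul_comm]

theorem common_far {x y : Fin n → Fin q} (h : 3 ≤ hammingDist x y) :
    nb x ∩ nb y = ∅ := by
  rw [Finset.eq_empty_iff_forall_notMem]
  intro z hz
  rw [Finset.mem_inter, mem_nb, mem_nb] at hz
  have := hammingDist_triangle x z y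
  rw [hz.1, hammingDist_comm z y, hz.2] at this
  omega

theorem common_two {x y : Fin n → Fin q} (h : hammingDist x y = 2) :
    (nb x ∩ nb y).card = 2 := by
  classical
  obtain ⟨i, j, hij, hi, hj, hrest⟩ := hd_eq_two_iff.1 h
  set z1 := Function.update x i (y i) with hz1
  set z2 := Function.update x j (y j) with hz2
  have hne : z1 ≠ z2 := by
    intro hcon
    have := congrFun hcon i
    rw [hz1, hz2, Function.update_self, Function.update_of_ne hij] at this
    exact hi this.symm
  have hset : nb x ∩ nb y = {z1, z2} := by
    ext z
    rw [Finset.mem_inter, mem_nb, mem_nb, Finset.mem_insert, Finset.mem_singleton]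
    constructor
    · rintro ⟨hxz, hyz⟩
      obtain ⟨k, hk, hkr⟩ := hd_eq_one_iff.1 hxz
      obtain ⟨l, hl, hlr⟩ := hd_eq_one_iff.1 hyz
      have hkij : k = i ∨ k = j := by
        by_contra hcon
        push_neg at hcon
        -- z differs from y at i, j, k, but d y z = 1
        have d1 : y i ≠ z i := by rw [← hkr i (fun hh => hcon.1 hh.symm)]; exact fun hh => hi hh.symm
        have d2 : y j ≠ z j := by rw [← hkr j (fun hh => hcon.2 hh.symm)]; exact fun hh => hj hh.symm
        rcases eq_or_ne l i with rfl | hli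
        · exact d2 (hlr j (Ne.symm hij))
        · exact d1 (hlr i (Ne.symm hli))
      rcases hkij with rfl | rfl
      · -- z = z1
        left
        have hzj : z j = x j := (hkr j (Ne.symm hij)).symm
        have : l = j := by
          by_contra hlj
          exact hj ((hlr j (fun hh => hlj hh.symm)).trans hzj).symm
        have hzk : z k = y k := by
          rw [(hlr k (this ▸ hij)).symm]
        funext m
        rcases eq_or_ne m k with rfl | hmk
        · rw [hz1, Function.update_self, hzk]
        · rw [hz1, Function.update_of_ne hmk, ← hkr m hmk]
      · -- z = z2
        right
        have hzi : z i = x i := (hkr i hij).symm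
        have : l = i := by
          by_contra hli
          exact hi ((hlr i (fun hh => hli hh.symm)).trans hzi).symm
        have hzk : z k = y k := by
          rw [(hlr k (this ▸ (Ne.symm hij))).symm]
        funext m
        rcases eq_or_ne m k with rfl | hmk
        · rw [hz2, Function.update_self, hzk]
        · rw [hz2, Function.update_of_ne hmk, ← hkr m hmk]
    · rintro (rfl | rfl)
      · refine ⟨hd_update (Ne.symm hi), hd_eq_one_iff.2 ⟨j, ?_, fun m hm => ?_⟩⟩
        · rw [hz1, Function.update_of_ne (Ne.symm hij)]
          exact Ne.symm hj
        · rcases eq_or_ne m i with rfl | hmi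
          · rw [hz1, Function.update_self]
          · rw [hz1, Function.update_of_ne hmi]
            exact (hrest m hmi hm).symm
      · refine ⟨hd_update (Ne.symm hj), hd_eq_one_iff.2 ⟨i, ?_, fun m hm => ?_⟩⟩
        · rw [hz2, Function.update_of_ne hij]
          exact Ne.symm hi
        · rcases eq_or_ne m j with rfl | hmj
          · rw [hz2, Function.update_self]
          · rw [hz2, Function.update_of_ne hmj]
            exact (hrest m hm hmj).symm
  rw [hset, Finset.card_insert_of_notMem (by simpa using hne), Finset.card_singleton]

theorem inter_nb_card (C : Finset (Fin n → Fin q)) (w : Fin n → Fin q) :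
    (C ∩ nb w).card = ∑ y ∈ C, if hammingDist w y = 1 then 1 else 0 := by
  classical
  have : C ∩ nb w = C.filter (fun y => hammingDist w y = 1) := by
    ext y; simp [mem_nb, Finset.mem_filter]
  rw [this, Finset.card_filter]

theorem double_count (A B : Finset (Fin n → Fin q)) :
    ∑ z ∈ A, (B ∩ nb z).card = ∑ y ∈ B, (A ∩ nb y).card := by
  classical
  simp only [inter_nb_card]
  rw [Finset.sum_comm]
  apply Finset.sum_congr rfl
  intro y _
  apply Finset.sum_congr rfl
  intro z _
  rw [hammingDist_comm]

theorem card_inter_eq_one_iff {S : Set (Fin n → Fin q)} {x : Fin n → Fin q} :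
    (S.toFinite.toFinset ∩ nb x).card = 1 ↔ (∃! y, y ∈ S ∧ hammingDist x y = 1) := by
  classical
  rw [Finset.card_eq_one]
  constructor
  · rintro ⟨a, ha⟩
    have haa : a ∈ S.toFinite.toFinset ∩ nb x := ha ▸ Finset.mem_singleton_self a
    rw [Finset.mem_inter, Set.Finite.mem_toFinset, mem_nb] at haa
    refine ⟨a, haa, fun y hy => ?_⟩
    have : y ∈ S.toFinite.toFinset ∩ nb x := by
      rw [Finset.mem_inter, Set.Finite.mem_toFinset, mem_nb]; exact hy
    rw [ha, Finset.mem_singleton] at this; exact this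
  · rintro ⟨a, ⟨haS, had⟩, hu⟩
    refine ⟨a, ?_⟩
    ext y
    rw [Finset.mem_inter, Set.Finite.mem_toFinset, mem_nb, Finset.mem_singleton]
    constructor
    · intro hy; exact hu y hy
    · rintro rfl; exact ⟨haS, had⟩

theorem sum_chi (S : Set (Fin n → Fin q)) (t : Finset (Fin n → Fin q)) :
    ∑ z ∈ t, chi S z = ((S.toFinite.toFinset ∩ t).card : ℝ) := by
  classical
  have : S.toFinite.toFinset ∩ t = t.filter (fun z => z ∈ S) := by
    ext z
    simp only [Finset.mem_inter, Set.Finite.mem_toFinset, Finset.mem_filter]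
    exact and_comm
  rw [this, ← Finset.sum_boole]
  apply Finset.sum_congr rfl
  intro z _
  simp [chi, Set.indicator_apply]

theorem adj_hamming {x y : Fin n → Fin q} :
    (hammingGraph n q).Adj x y ↔ hammingDist x y = 1 := Iff.rfl

theorem bt_symm {S0 S1 : Set (Fin n → Fin q)}
    (h : IsSphericalBitrade (hammingGraph n q) S0 S1) :
    IsSphericalBitrade (hammingGraph n q) S1 S0 := by
  obtain ⟨hd, h0, h1, hx⟩ := h
  exact ⟨hd.symm, h1, h0, fun x => (hx x).imp (fun ⟨a, b⟩ => ⟨b, a⟩)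
    (fun h y hy => h y (Set.union_comm S1 S0 ▸ hy))⟩

/-- In a bitrade, a sphere contains at most one element of `S0`. -/
theorem bt_unique0 {S0 S1 : Set (Fin n → Fin q)}
    (h : IsSphericalBitrade (hammingGraph n q) S0 S1) {z x w : Fin n → Fin q}
    (hx : x ∈ S0) (hdx : hammingDist z x = 1) (hw : w ∈ S0) (hdw : hammingDist z w = 1) :
    x = w := by
  rcases h.2.2.2 z with ⟨he, _⟩ | hno
  · exact (he.unique ⟨hx, hdx⟩ ⟨hw, hdw⟩)
  · exact absurd hdx (hno x (Set.mem_union_left _ hx))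

/-- In a bitrade, distinct elements of `S0` are at distance at least 3. -/
theorem bt_mindist {S0 S1 : Set (Fin n → Fin q)} (hq : 3 ≤ q)
    (h : IsSphericalBitrade (hammingGraph n q) S0 S1) {x w : Fin n → Fin q}
    (hx : x ∈ S0) (hw : w ∈ S0) (hxw : x ≠ w) : 3 ≤ hammingDist x w := by
  by_contra hc
  push_neg at hc
  have h1 : 1 ≤ hammingDist x w := by
    have := hammingDist_ne_zero.2 hxw; omega
  interval_cases hd : hammingDist x w
  · -- distance 1
    obtain ⟨i, hi, hrest⟩ := hd_eq_one_iff.1 hd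
    obtain ⟨c, hc1, hc2⟩ := exists_third hq (x i) (w i)
    set z := Function.update x i c with hz
    have hzx : hammingDist z x = 1 := by
      rw [hammingDist_comm]; exact hd_update hc1
    have hzw : hammingDist z w = 1 := by
      refine hd_eq_one_iff.2 ⟨i, by simpa [hz] using hc2, fun m hm => ?_⟩
      rw [hz, Function.update_of_ne hm]; exact hrest m hm
    exact hxw (bt_unique0 h hx hzx hw hzw)
  · -- distance 2
    obtain ⟨i, j, hij, hi, hj, hrest⟩ := hd_eq_two_iff.1 hd
    set z := Function.update x i (w i) with hz
    have hzx : hammingDist z x = 1 := by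
      rw [hammingDist_comm]; exact hd_update (Ne.symm hi)
    have hzw : hammingDist z w = 1 := by
      refine hd_eq_one_iff.2 ⟨j, ?_, fun m hm => ?_⟩
      · rw [hz, Function.update_of_ne (Ne.symm hij)]; exact hj
      · rcases eq_or_ne m i with rfl | hmi
        · rw [hz, Function.update_self]
        · rw [hz, Function.update_of_ne hmi]; exact hrest m hmi hm
    exact hxw (bt_unique0 h hx hzx hw hzw)

/-- In a bitrade, every neighbor of an element of `S0` has exactly one `S1`-neighbor. -/
theorem bt_step {S0 S1 : Set (Fin n → Fin q)}
    (h : IsSphericalBitrade (hammingGraph n q) S0 S1) {x z : Fin n → Fin q}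
    (hx : x ∈ S0) (hdz : hammingDist x z = 1) :
    ∃! y, y ∈ S1 ∧ hammingDist z y = 1 := by
  rcases h.2.2.2 z with ⟨_, he⟩ | hno
  · exact he
  · have hzx : (hammingGraph n q).Adj z x := by
      rw [adj_hamming, hammingDist_comm]; exact hdz
    exact absurd hzx (hno x (Set.mem_union_left _ hx))

/-- In a bitrade, `S0` and `S1` are at distance at least 2. -/
theorem bt_sep {S0 S1 : Set (Fin n → Fin q)} (hq : 3 ≤ q)
    (h : IsSphericalBitrade (hammingGraph n q) S0 S1) {x y : Fin n → Fin q}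
    (hx : x ∈ S0) (hy : y ∈ S1) : 2 ≤ hammingDist x y := by
  have hne : x ≠ y := fun hc => (h.1.ne_of_mem hx hy) hc
  have h1 : 1 ≤ hammingDist x y := by have := hammingDist_ne_zero.2 hne; omega
  rcases eq_or_lt_of_le h1 with heq | hlt
  · exfalso
    rcases h.2.2.2 x with ⟨he, _⟩ | hno
    · obtain ⟨w, ⟨hwS, hwd⟩, -⟩ := he
      rw [adj_hamming] at hwd
      have hxw : x ≠ w := by
        intro hc; rw [hc, hammingDist_self] at hwd; omega
      have := bt_mindist hq h hx hwS hxw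
      omega
    · exact hno y (Set.mem_union_right _ hy) heq.symm
  · omega

/-- In a bitrade, there exist elements of `S0` and `S1` at distance exactly 2. -/
theorem bt_dist2 {S0 S1 : Set (Fin n → Fin q)} (hq : 3 ≤ q) (hn : 2 ≤ n)
    (h : IsSphericalBitrade (hammingGraph n q) S0 S1) :
    ∃ x ∈ S0, ∃ y ∈ S1, hammingDist x y = 2 := by
  obtain ⟨x, hx⟩ := h.2.1
  have hn0 : 0 < n := by omega
  set i0 : Fin n := ⟨0, hn0⟩
  obtain ⟨c, hc1, -⟩ := exists_third hq (x i0) (x i0)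
  set z := Function.update x i0 c with hz
  have hxz : hammingDist x z = 1 := hd_update hc1
  obtain ⟨y, ⟨hyS, hyd⟩, -⟩ := bt_step h hx hxz
  refine ⟨x, hx, y, hyS, ?_⟩
  have hle := hammingDist_triangle x z y
  have hge := bt_sep hq h hx hyS
  omega

/-- In a bitrade, there exist distinct elements of `S0` at distance exactly 3. -/
theorem bt_dist3 {S0 S1 : Set (Fin n → Fin q)} (hq : 3 ≤ q) (hn : 2 ≤ n)
    (h : IsSphericalBitrade (hammingGraph n q) S0 S1) :
    ∃ x ∈ S0, ∃ x' ∈ S0, x ≠ x' ∧ hammingDist x x' = 3 := by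
  obtain ⟨x, hx, y, hy, hxy⟩ := bt_dist2 hq hn h
  obtain ⟨i, j, hij, hi, hj, hrest⟩ := hd_eq_two_iff.1 hxy
  obtain ⟨c, hcx, hcy⟩ := exists_third hq (x i) (y i)
  set w := Function.update y i c with hw
  have hyw : hammingDist y w = 1 := hd_update hcy
  have hxw : hammingDist x w = 2 := by
    refine hd_eq_two_iff.2 ⟨i, j, hij, ?_, ?_, fun k hk1 hk2 => ?_⟩
    · rw [hw, Function.update_self]; exact Ne.symm hcx
    · rw [hw, Function.update_of_ne (Ne.symm hij)]; exact hj
    · rw [hw, Function.update_of_ne hk1]; exact hrest k hk1 hk2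
  -- the sphere around w contains y ∈ S1, hence contains some x' ∈ S0
  rcases h.2.2.2 w with ⟨he0, _⟩ | hno
  · obtain ⟨x', ⟨hx'S, hx'd⟩, -⟩ := he0
    rw [adj_hamming] at hx'd
    have hxx' : x ≠ x' := by
      intro hc
      rw [← hc, hammingDist_comm] at hx'd
      omega
    refine ⟨x, hx, x', hx'S, hxx', ?_⟩
    have hle := hammingDist_triangle x w x'
    have hge := bt_mindist hq h hx hx'S hxx'
    omega
  · exfalso
    have : (hammingGraph n q).Adj w y := by
      rw [adj_hamming, hammingDist_comm]; exact hyw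
    exact hno y (Set.mem_union_right _ hy) this

/-- counting common neighbours against a separated set -/
theorem count_common {S : Set (Fin n → Fin q)} {x : Fin n → Fin q}
    (hsep : ∀ y ∈ S, 2 ≤ hammingDist x y) :
    ∑ y ∈ S.toFinite.toFinset, (nb x ∩ nb y).card
      = 2 * (S.toFinite.toFinset.filter (fun y => hammingDist x y = 2)).card := by
  classical
  have : ∀ y ∈ S.toFinite.toFinset, (nb x ∩ nb y).card
      = if hammingDist x y = 2 then 2 else 0 := by
    intro y hy
    rw [Set.Finite.mem_toFinset] at hy
    rcases eq_or_ne (hammingDist x y) 2 with h2 | h2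
    · rw [if_pos h2, common_two h2]
    · rw [if_neg h2]
      have : 3 ≤ hammingDist x y := by
        have := hsep y hy; omega
      rw [common_far this, Finset.card_empty]
  rw [Finset.sum_congr rfl this, ← Finset.sum_filter, Finset.sum_const, smul_eq_mul, mul_comm]

/-- The number of elements of `S1` at distance 2 from `x ∈ S0`, doubled, is `(q-1)n`. -/
theorem bt_count {S0 S1 : Set (Fin n → Fin q)} (hq : 3 ≤ q)
    (h : IsSphericalBitrade (hammingGraph n q) S0 S1) {x : Fin n → Fin q} (hx : x ∈ S0) :
    2 * {y ∈ S1 | hammingDist x y = 2}.ncard = (q - 1) * n := by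
  classical
  have hone : ∀ z ∈ nb x, (S1.toFinite.toFinset ∩ nb z).card = 1 := by
    intro z hz
    rw [card_inter_eq_one_iff]
    exact bt_step h hx (mem_nb.1 hz)
  have hsum : ∑ z ∈ nb x, (S1.toFinite.toFinset ∩ nb z).card = (q - 1) * n := by
    rw [Finset.sum_congr rfl hone, Finset.sum_const, smul_eq_mul, mul_one, card_nb]
  rw [double_count] at hsum
  rw [count_common (fun y hy => bt_sep hq h hx hy)] at hsum
  have hncard : {y ∈ S1 | hammingDist x y = 2}.ncard
      = (S1.toFinite.toFinset.filter (fun y => hammingDist x y = 2)).card := by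
    rw [← Set.ncard_coe_finset]
    congr 1
    ext y
    simp only [Finset.coe_filter, Set.Finite.mem_toFinset, Set.mem_setOf_eq]
  rw [hncard]
  exact hsum

theorem nbset_eq (x : Fin n → Fin q) :
    (hammingGraph n q).neighborSet x = ↑(nb x) := by
  ext y
  rw [SimpleGraph.mem_neighborSet, adj_hamming, Finset.mem_coe, mem_nb]

theorem finsum_nb (S0 S1 : Set (Fin n → Fin q)) (x : Fin n → Fin q) :
    ∑ᶠ y ∈ (hammingGraph n q).neighborSet x, (chi S0 - chi S1) y
      = ((S0.toFinite.toFinset ∩ nb x).card : ℝ)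
        - ((S1.toFinite.toFinset ∩ nb x).card : ℝ) := by
  rw [nbset_eq, finsum_mem_coe_finset]
  simp only [Pi.sub_apply]
  rw [Finset.sum_sub_distrib, sum_chi, sum_chi]

theorem mindist_card_le {S : Set (Fin n → Fin q)}
    (hmin : ∀ x ∈ S, ∀ y ∈ S, x ≠ y → 3 ≤ hammingDist x y) (x : Fin n → Fin q) :
    (S.toFinite.toFinset ∩ nb x).card ≤ 1 := by
  by_contra hc
  push_neg at hc
  obtain ⟨a, ha, b, hb, hab⟩ := Finset.one_lt_card.1 hc
  rw [Finset.mem_inter, Set.Finite.mem_toFinset, mem_nb] at ha hb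
  have := hammingDist_triangle_left a b x
  have h3 := hmin a ha.1 b hb.1 hab
  omega

theorem card_eq_one_of_mem {S : Set (Fin n → Fin q)} {x : Fin n → Fin q}
    (hle : (S.toFinite.toFinset ∩ nb x).card ≤ 1)
    (hex : ∃ y ∈ S, hammingDist x y = 1) :
    (S.toFinite.toFinset ∩ nb x).card = 1 := by
  obtain ⟨y, hy, hd⟩ := hex
  have : y ∈ S.toFinite.toFinset ∩ nb x := by
    rw [Finset.mem_inter, Set.Finite.mem_toFinset, mem_nb]; exact ⟨hy, hd⟩
  have := Finset.card_pos.2 ⟨y, this⟩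
  omega

/-- A bitrade gives a 0-eigenfunction. -/
theorem bt_eig {S0 S1 : Set (Fin n → Fin q)}
    (h : IsSphericalBitrade (hammingGraph n q) S0 S1) :
    IsEigenfun (hammingGraph n q) 0 (chi S0 - chi S1) := by
  classical
  constructor
  · obtain ⟨x0, hx0⟩ := h.2.1
    intro hf
    have := congrFun hf x0
    have hx1 : x0 ∉ S1 := fun hc => (h.1.ne_of_mem hx0 hc) rfl
    simp [chi, Set.indicator_of_mem hx0, Set.indicator_of_notMem hx1] at this
  · intro x
    rw [finsum_nb, zero_mul]
    have : (S0.toFinite.toFinset ∩ nb x).card = (S1.toFinite.toFinset ∩ nb x).card := by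
      rcases h.2.2.2 x with ⟨he0, he1⟩ | hno
      · rw [card_inter_eq_one_iff.2 he0, card_inter_eq_one_iff.2 he1]
      · have hv : ∀ (S : Set (Fin n → Fin q)), (∀ y ∈ S, ¬ (hammingGraph n q).Adj x y) →
            S.toFinite.toFinset ∩ nb x = ∅ := by
          intro S hS
          rw [Finset.eq_empty_iff_forall_notMem]
          intro y hy
          rw [Finset.mem_inter, Set.Finite.mem_toFinset, mem_nb] at hy
          exact hS y hy.1 hy.2
        rw [hv S0 (fun y hy => hno y (Set.mem_union_left _ hy)),
          hv S1 (fun y hy => hno y (Set.mem_union_right _ hy))]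
    rw [this, sub_self]

/-- (ii) implies (i). -/
theorem eig_to_bt {S0 S1 : Set (Fin n → Fin q)}
    (hdisj : Disjoint S0 S1) (h0 : S0.Nonempty) (h1 : S1.Nonempty)
    (hm0 : ∀ x ∈ S0, ∀ y ∈ S0, x ≠ y → 3 ≤ hammingDist x y)
    (hm1 : ∀ x ∈ S1, ∀ y ∈ S1, x ≠ y → 3 ≤ hammingDist x y)
    (heig : IsEigenfun (hammingGraph n q) 0 (chi S0 - chi S1)) :
    IsSphericalBitrade (hammingGraph n q) S0 S1 := by
  refine ⟨hdisj, h0, h1, fun x => ?_⟩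
  have heq := (heig.2 x).symm
  rw [finsum_nb, zero_mul, sub_eq_zero] at heq
  have hcard : (S0.toFinite.toFinset ∩ nb x).card = (S1.toFinite.toFinset ∩ nb x).card :=
    Nat.cast_injective heq
  have hle0 := mindist_card_le hm0 x
  interval_cases hC : (S0.toFinite.toFinset ∩ nb x).card
  · right
    intro y hy hadj
    rw [adj_hamming] at hadj
    have : ∀ (S : Set (Fin n → Fin q)), (S.toFinite.toFinset ∩ nb x).card = 0 →
        y ∈ S → False := by
      intro S hS hyS
      rw [Finset.card_eq_zero, Finset.eq_empty_iff_forall_notMem] at hS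
      exact hS y (by rw [Finset.mem_inter, Set.Finite.mem_toFinset, mem_nb]; exact ⟨hyS, hadj⟩)
    rcases hy with hy | hy
    · exact this S0 hC hy
    · exact this S1 hcard.symm hy
  · left
    exact ⟨card_inter_eq_one_iff.1 hC, card_inter_eq_one_iff.1 hcard.symm⟩

theorem ncard_filter_eq (S : Set (Fin n → Fin q)) (x : Fin n → Fin q) :
    {y ∈ S | hammingDist x y = 2}.ncard
      = (S.toFinite.toFinset.filter (fun y => hammingDist x y = 2)).card := by
  classical
  rw [← Set.ncard_coe_finset]
  congr 1
  ext y
  simp only [Finset.coe_filter, Set.Finite.mem_toFinset, Set.mem_setOf_eq]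

/-- Key step for (iii) → (i): every neighbour of an element of `S0` has exactly one
`S1`-neighbour. -/
theorem key_step {S0 S1 : Set (Fin n → Fin q)}
    (hm1 : ∀ x ∈ S1, ∀ y ∈ S1, x ≠ y → 3 ≤ hammingDist x y)
    (hsep : ∀ x ∈ S0, ∀ y ∈ S1, 2 ≤ hammingDist x y)
    (hc0 : ∀ x ∈ S0, 2 * {y ∈ S1 | hammingDist x y = 2}.ncard = (q - 1) * n)
    {x0 z : Fin n → Fin q} (hx0 : x0 ∈ S0) (hz : hammingDist x0 z = 1) :
    (S1.toFinite.toFinset ∩ nb z).card = 1 := by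
  classical
  have hle : ∀ w ∈ nb x0, (S1.toFinite.toFinset ∩ nb w).card ≤ 1 :=
    fun w _ => mindist_card_le hm1 w
  have hsum : ∑ w ∈ nb x0, (S1.toFinite.toFinset ∩ nb w).card = ∑ w ∈ nb x0, 1 := by
    rw [double_count, count_common (fun y hy => hsep x0 hx0 y hy), ← ncard_filter_eq,
      hc0 x0 hx0, Finset.sum_const, smul_eq_mul, mul_one, card_nb]
  have := (Finset.sum_eq_sum_iff_of_le hle).1 hsum
  exact this z (mem_nb.2 hz)

/-- (iii) implies (i). -/
theorem count_to_bt {S0 S1 : Set (Fin n → Fin q)}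
    (hdisj : Disjoint S0 S1) (h0 : S0.Nonempty) (h1 : S1.Nonempty)
    (hm0 : ∀ x ∈ S0, ∀ y ∈ S0, x ≠ y → 3 ≤ hammingDist x y)
    (hm1 : ∀ x ∈ S1, ∀ y ∈ S1, x ≠ y → 3 ≤ hammingDist x y)
    (hsep : ∀ x ∈ S0, ∀ y ∈ S1, 2 ≤ hammingDist x y)
    (hc0 : ∀ x ∈ S0, 2 * {y ∈ S1 | hammingDist x y = 2}.ncard = (q - 1) * n)
    (hc1 : ∀ x ∈ S1, 2 * {y ∈ S0 | hammingDist x y = 2}.ncard = (q - 1) * n) :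
    IsSphericalBitrade (hammingGraph n q) S0 S1 := by
  classical
  have hsep' : ∀ x ∈ S1, ∀ y ∈ S0, 2 ≤ hammingDist x y := by
    intro x hx y hy
    rw [hammingDist_comm]
    exact hsep y hy x hx
  refine ⟨hdisj, h0, h1, fun x => ?_⟩
  by_cases hA : ∃ y ∈ S0, hammingDist x y = 1
  · left
    obtain ⟨y0, hy0, hy0d⟩ := hA
    have hB : (S1.toFinite.toFinset ∩ nb x).card = 1 :=
      key_step hm1 hsep hc0 hy0 (hammingDist_comm x y0 ▸ hy0d)
    have hA' : (S0.toFinite.toFinset ∩ nb x).card = 1 :=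
      card_eq_one_of_mem (mindist_card_le hm0 x) ⟨y0, hy0, hy0d⟩
    exact ⟨card_inter_eq_one_iff.1 hA', card_inter_eq_one_iff.1 hB⟩
  · have hB : ¬ ∃ y ∈ S1, hammingDist x y = 1 := by
      rintro ⟨y1, hy1, hy1d⟩
      have := key_step hm0 hsep' hc1 hy1 (hammingDist_comm x y1 ▸ hy1d)
      rw [Finset.card_eq_one] at this
      obtain ⟨a, ha⟩ := this
      have haa : a ∈ S0.toFinite.toFinset ∩ nb x := ha ▸ Finset.mem_singleton_self a
      rw [Finset.mem_inter, Set.Finite.mem_toFinset, mem_nb] at haa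
      exact hA ⟨a, haa.1, haa.2⟩
    right
    intro y hy hadj
    rw [adj_hamming] at hadj
    rcases hy with hy | hy
    · exact hA ⟨y, hy, hadj⟩
    · exact hB ⟨y, hy, hadj⟩

/-- For `q ≥ 3`, `n ≥ 2` and disjoint nonempty `q`-ary codes `S0, S1` of length
`n`: (i) `(S0,S1)` is a spherical bitrade in `H(n,q)` iff (ii) `d_{S0} = d_{S1} = 3` and
`χ_{S0} - χ_{S1}` is a `0`-eigenfunction of `H(n,q)`, and (i) holds iff (iii)
`d_{S0} = d_{S1} = 3`, `d(S0,S1) = 2`, and each `x ∈ S_i` has exactly `(q-1)n/2` tuples of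
`S_{1-i}` at distance 2 from it. -/
theorem statement6 (q n : ℕ) (hq : 3 ≤ q) (hn : 2 ≤ n)
    (S0 S1 : Set (Fin n → Fin q)) (hdisj : Disjoint S0 S1)
    (h0 : S0.Nonempty) (h1 : S1.Nonempty) :
    (IsSphericalBitrade (hammingGraph n q) S0 S1 ↔
      (HasMinHDist S0 3 ∧ HasMinHDist S1 3 ∧
        IsEigenfun (hammingGraph n q) 0 (chi S0 - chi S1))) ∧
    (IsSphericalBitrade (hammingGraph n q) S0 S1 ↔
      (HasMinHDist S0 3 ∧ HasMinHDist S1 3 ∧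
        (∀ x ∈ S0, ∀ y ∈ S1, 2 ≤ hammingDist x y) ∧
        (∃ x ∈ S0, ∃ y ∈ S1, hammingDist x y = 2) ∧
        (∀ x ∈ S0, 2 * {y ∈ S1 | hammingDist x y = 2}.ncard = (q - 1) * n) ∧
        (∀ x ∈ S1, 2 * {y ∈ S0 | hammingDist x y = 2}.ncard = (q - 1) * n))) := by
  have hmd : ∀ (T0 T1 : Set (Fin n → Fin q)),
      IsSphericalBitrade (hammingGraph n q) T0 T1 → HasMinHDist T0 3 := by
    intro T0 T1 hbt
    refine ⟨fun x hx y hy hxy => bt_mindist hq hbt hx hy hxy, ?_⟩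
    obtain ⟨x, hx, x', hx', hne, hd⟩ := bt_dist3 hq hn hbt
    exact ⟨x, hx, x', hx', hne, hd⟩
  constructor
  · constructor
    · intro hbt
      exact ⟨hmd S0 S1 hbt, hmd S1 S0 (bt_symm hbt), bt_eig hbt⟩
    · rintro ⟨hm0, hm1, heig⟩
      exact eig_to_bt hdisj h0 h1 hm0.1 hm1.1 heig
  · constructor
    · intro hbt
      refine ⟨hmd S0 S1 hbt, hmd S1 S0 (bt_symm hbt),
        fun x hx y hy => bt_sep hq hbt hx hy, bt_dist2 hq hn hbt,
        fun x hx => bt_count hq hbt hx, fun x hx => bt_count hq (bt_symm hbt) hx⟩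
    · rintro ⟨hm0, hm1, hsep, -, hc0, hc1⟩
      exact count_to_bt hdisj h0 h1 hm0.1 hm1.1 hsep hc0 hc1
end

section
/- Let q ≥ 3. The volume of any nonempty perfect bitrade in the Hamming graph H(q+1, q) is at least q!. -/
open scoped BigOperators

namespace St15

open Function

variable {q : ℕ}

abbrev V (q : ℕ) := Fin (q + 1) → Fin q

theorem hd_eq (x y : V q) :
    hammingDist x y = (Finset.univ.filter fun i => x i ≠ y i).card := rfl

theorem adj_update (x : V q) (k : Fin (q+1)) (c : Fin q) (hc : c ≠ x k) :
    (hammingGraph (q+1) q).Adj x (Function.update x k c) := by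
  show hammingDist x (Function.update x k c) = 1
  rw [hd_eq]
  have : (Finset.univ.filter fun i => x i ≠ Function.update x k c i) = {k} := by
    ext i
    by_cases h : i = k <;>
      simp [h, Function.update_apply, Ne.symm hc]
  rw [this, Finset.card_singleton]

theorem adj_rep {x y : V q} (h : (hammingGraph (q+1) q).Adj x y) :
    ∃ k c, c ≠ x k ∧ y = Function.update x k c := by
  have h1 : (Finset.univ.filter fun i => x i ≠ y i).card = 1 := by
    rw [← hd_eq]; exact h
  obtain ⟨k, hk⟩ := Finset.card_eq_one.mp h1
  refine ⟨k, y k, ?_, ?_⟩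
  · have : k ∈ Finset.univ.filter fun i => x i ≠ y i := by rw [hk]; simp
    simp only [Finset.mem_filter] at this
    exact fun he => this.2 he.symm
  · funext i
    by_cases h2 : i = k
    · subst h2; simp
    · have : i ∉ Finset.univ.filter fun j => x j ≠ y j := by
        rw [hk]; simp [h2]
      simp only [Finset.mem_filter, Finset.mem_univ, true_and, not_not] at this
      rw [Function.update_apply, if_neg h2, this]

theorem mem_ball_self (x : V q) : x ∈ ball1 (hammingGraph (q+1) q) x := Or.inl rfl

theorem mem_ball_update (x : V q) (k : Fin (q+1)) (c : Fin q) :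
    Function.update x k c ∈ ball1 (hammingGraph (q+1) q) x := by
  by_cases hc : c = x k
  · subst hc; rw [Function.update_eq_self]; exact Or.inl rfl
  · exact Or.inr (adj_update x k c hc)

theorem mem_ball_update' (x : V q) (k : Fin (q+1)) (c : Fin q) :
    x ∈ ball1 (hammingGraph (q+1) q) (Function.update x k c) := by
  have := mem_ball_update (Function.update x k c) k (x k)
  rwa [Function.update_idem, Function.update_eq_self] at this

/-- The symmetrized bitrade condition, on finsets. -/
def GoodPair (q : ℕ) (A B : Finset (V q)) : Prop :=
  Disjoint A B ∧
    ∀ x : V q,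
      ((∃! y, y ∈ A ∧ y ∈ ball1 (hammingGraph (q+1) q) x) ∧
        (∃! y, y ∈ B ∧ y ∈ ball1 (hammingGraph (q+1) q) x)) ∨
      (∀ y, (y ∈ A ∨ y ∈ B) → y ∉ ball1 (hammingGraph (q+1) q) x)

theorem GoodPair.symm {A B : Finset (V q)} (h : GoodPair q A B) : GoodPair q B A := by
  refine ⟨h.1.symm, fun x => ?_⟩
  rcases h.2 x with ⟨h1, h2⟩ | h3
  · exact Or.inl ⟨h2, h1⟩
  · exact Or.inr fun y hy => h3 y hy.symm

/-- If a ball contains a point of `A`, the "balanced" branch holds there. -/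
theorem GoodPair.cover {A B : Finset (V q)} (h : GoodPair q A B) {x w : V q}
    (hx : x ∈ A) (hxw : x ∈ ball1 (hammingGraph (q+1) q) w) :
    (∃! y, y ∈ A ∧ y ∈ ball1 (hammingGraph (q+1) q) w) ∧
      (∃! y, y ∈ B ∧ y ∈ ball1 (hammingGraph (q+1) q) w) :=
  (h.2 w).resolve_right fun h3 => h3 x (Or.inl hx) hxw

/-- Two same-colour points sharing a ball are equal. -/
theorem GoodPair.sep {A B : Finset (V q)} (h : GoodPair q A B) {x y w : V q}
    (hx : x ∈ A) (hy : y ∈ A)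
    (hxw : x ∈ ball1 (hammingGraph (q+1) q) w)
    (hyw : y ∈ ball1 (hammingGraph (q+1) q) w) : x = y := by
  obtain ⟨⟨a, _, ha⟩, _⟩ := h.cover hx hxw
  rw [ha x ⟨hx, hxw⟩, ha y ⟨hy, hyw⟩]

/-- Each point of `A` has a unique opposite neighbour (its partner). -/
theorem GoodPair.partner {A B : Finset (V q)} (h : GoodPair q A B) {u : V q}
    (hu : u ∈ A) :
    ∃ j e, e ≠ u j ∧ Function.update u j e ∈ B ∧
      (∀ b, b ∈ B → b ∈ ball1 (hammingGraph (q+1) q) u → b = Function.update u j e) := by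
  obtain ⟨-, ⟨b, ⟨hbB, hbball⟩, hbu⟩⟩ := h.cover hu (mem_ball_self u)
  have hbne : b ≠ u := fun he => (Finset.disjoint_left.mp h.1 hu) (he ▸ hbB)
  rcases hbball with he | hadj
  · exact absurd he hbne
  · obtain ⟨j, e, hej, hrep⟩ := adj_rep hadj
    exact ⟨j, e, hej, hrep ▸ hbB,
      fun b' hb' hball' => (hbu b' ⟨hb', hball'⟩).trans hrep⟩

end St15

namespace St15

theorem upd_eval (u : V q) (k : Fin (q+1)) (c : Fin q) (i : Fin (q+1)) :
    Function.update u k c i = if i = k then c else u i := Function.update_apply ..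

/-- The Latin move. -/
theorem GoodPair.latin {A B : Finset (V q)} (h : GoodPair q A B) {u : V q}
    (hu : u ∈ A) {j : Fin (q+1)} {e : Fin q} (hej : e ≠ u j)
    (hP : Function.update u j e ∈ B)
    (hPu : ∀ b, b ∈ B → b ∈ ball1 (hammingGraph (q+1) q) u →
      b = Function.update u j e)
    {k : Fin (q+1)} (hkj : k ≠ j) {c : Fin q} (hc : c ≠ u k) :
    ∃ k' c', k' ≠ k ∧ k' ≠ j ∧ c' ≠ u k' ∧
      Function.update (Function.update u k c) k' c' ∈ B := by
  obtain ⟨-, ⟨z, ⟨hzB, hzball⟩, -⟩⟩ := h.cover hu (mem_ball_update' u k c)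
  -- z ≠ update u k c
  have hzy : z ≠ Function.update u k c := by
    intro he
    have h1 := hPu z hzB (he ▸ mem_ball_update u k c)
    have h2 := congrFun (h1.symm.trans he) k
    simp [upd_eval, hkj] at h2
    exact hc h2.symm
  rcases hzball with he | hadj
  · exact absurd he hzy
  · obtain ⟨k', c', hck', hrep⟩ := adj_rep hadj
    by_cases hk'k : k' = k
    · -- z = update u k c' : forces z = partner, contradiction
      exfalso
      subst hk'k
      have hz2 : z = Function.update u k' c' := by
        rw [hrep, Function.update_idem]
      have hzP := hPu z hzB (hz2 ▸ mem_ball_update u k' c')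
      have h2 := congrFun (hz2.symm.trans hzP) k'
      simp [upd_eval, hkj] at h2
      have hzu : z = u := by rw [hz2, h2, Function.update_eq_self]
      exact (Finset.disjoint_left.mp h.1 hu) (hzu ▸ hzB)
    · have hck'' : c' ≠ u k' := by
        rwa [Function.update_of_ne hk'k] at hck'
      refine ⟨k', c', hk'k, ?_, hck'', hrep ▸ hzB⟩
      -- k' ≠ j : else z and partner share a ball, but are distinct, both in B
      intro hk'j
      subst hk'j
      -- w := u[k↦c][k'↦e]
      have hzball' : z ∈ ball1 (hammingGraph (q+1) q)
          (Function.update (Function.update u k c) k' e) := by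
        have h3 : z = Function.update
            (Function.update (Function.update u k c) k' e) k' c' := by
          rw [Function.update_idem, hrep]
        rw [h3]; exact mem_ball_update _ k' c'
      have hPball' : Function.update u k' e ∈ ball1 (hammingGraph (q+1) q)
          (Function.update (Function.update u k c) k' e) := by
        have h3 : Function.update (Function.update u k c) k' e
            = Function.update (Function.update u k' e) k c := by
          funext i
          by_cases h1 : i = k <;> by_cases h2 : i = k' <;>
            simp_all [upd_eval]
        rw [h3]; exact mem_ball_update' _ k c
      have hzP : z = Function.update u k' e := h.symm.sep hzB hP hzball' hPball'
      have h2 := congrFun (hrep.symm.trans hzP) k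
      simp [upd_eval, hk'k, hkj, Ne.symm hk'k] at h2
      exact hc h2

/-- Blocking injectivity. -/
theorem GoodPair.block {A B : Finset (V q)} (h : GoodPair q A B) {u : V q}
    {k t : Fin (q+1)} (htk : t ≠ k) {c1 c2 c1' c2' : Fin q}
    (h1 : Function.update (Function.update u k c1) t c1' ∈ B)
    (h2 : Function.update (Function.update u k c2) t c2' ∈ B) : c1 = c2 := by
  -- common ball centre w := u[k↦c1][t↦c2']
  have hz1w : Function.update (Function.update u k c1) t c1'
      ∈ ball1 (hammingGraph (q+1) q)
        (Function.update (Function.update u k c1) t c2') := by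
    have h3 : Function.update (Function.update u k c1) t c1'
        = Function.update (Function.update (Function.update u k c1) t c2') t c1' := by
      rw [Function.update_idem]
    rw [h3]; exact mem_ball_update _ t c1'
  have hz2w : Function.update (Function.update u k c2) t c2'
      ∈ ball1 (hammingGraph (q+1) q)
        (Function.update (Function.update u k c1) t c2') := by
    have h3 : Function.update (Function.update u k c1) t c2'
        = Function.update (Function.update (Function.update u k c2) t c2') k c1 := by
      funext i
      by_cases ha : i = k <;> by_cases hb : i = t <;>
        simp_all [upd_eval]
    rw [h3]; exact mem_ball_update' _ k c1
  have he := h.symm.sep h1 h2 hz1w hz2w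
  have h3 := congrFun he k
  simpa [upd_eval, Ne.symm htk] using h3

end St15

namespace St15

variable (q) in
/-- The subcube of vertices agreeing with `u` on the coordinates in `C`. -/
def Qf (C : Finset (Fin (q+1))) (u : V q) : Finset (V q) :=
  Finset.univ.filter (fun x => ∀ i ∈ C, x i = u i)

theorem mem_Qf {C : Finset (Fin (q+1))} {u x : V q} :
    x ∈ Qf q C u ↔ ∀ i ∈ C, x i = u i := by simp [Qf]

theorem main {q : ℕ} : ∀ (d : ℕ), 1 ≤ d →
    ∀ (A B : Finset (V q)), GoodPair q A B →
    ∀ (C : Finset (Fin (q+1))) (u : V q), C.card + d = q → u ∈ A →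
      Nat.factorial d ≤ (A ∩ Qf q C u).card ∧
        Nat.factorial d ≤ (B ∩ Qf q C u).card := by
  classical
  intro d
  induction d with
  | zero => intro h; exact absurd h (by norm_num)
  | succ d ih =>
    intro _ A B hAB C u hC hu
    obtain ⟨j, e, hej, hP, hPu⟩ := hAB.partner hu
    have huQ : u ∈ A ∩ Qf q C u := by
      simp [Finset.mem_inter, hu, mem_Qf]
    by_cases hd0 : d = 0
    · -- base case d + 1 = 1
      subst hd0
      constructor
      · simpa [Nat.factorial] using Finset.card_pos.mpr ⟨u, huQ⟩
      · -- find a point of B in the subcube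
        have : ∃ b, b ∈ B ∩ Qf q C u := by
          by_cases hjC : j ∈ C
          · -- pigeonhole case
            by_contra hno
            push_neg at hno
            have hkex : (Cᶜ : Finset (Fin (q+1))).Nonempty := by
              rw [← Finset.card_pos, Finset.card_compl]
              have := Finset.card_le_univ C
              simp only [Finset.card_univ, Fintype.card_fin] at *
              omega
            obtain ⟨k, hk⟩ := hkex
            have hkC : k ∉ C := Finset.mem_compl.mp hk
            have hkj : k ≠ j := fun h => hkC (h ▸ hjC)
            -- every c ≠ u k yields a blocked coordinate in C.erase j
            have key : ∀ c : Fin q, c ≠ u k →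
                ∃ t ∈ C.erase j, ∃ c', Function.update (Function.update u k c) t c' ∈ B := by
              intro c hc
              obtain ⟨k', c', hk'k, hk'j, hc', hzB⟩ := hAB.latin hu hej hP hPu hkj hc
              have hk'C : k' ∈ C := by
                by_contra hk'C
                refine hno _ (Finset.mem_inter.mpr ⟨hzB, mem_Qf.mpr fun i hi => ?_⟩)
                have hik : i ≠ k := fun h => hkC (h ▸ hi)
                have hik' : i ≠ k' := fun h => hk'C (h ▸ hi)
                rw [Function.update_of_ne hik', Function.update_of_ne hik]
              exact ⟨k', Finset.mem_erase.mpr ⟨hk'j, hk'C⟩, c', hzB⟩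
            -- pigeonhole
            set W : Finset (Fin q) := Finset.univ.erase (u k) with hW
            have hWcard : W.card = q - 1 := by
              rw [hW, Finset.card_erase_of_mem (Finset.mem_univ _)]
              simp
            have hCj : (C.erase j).card = C.card - 1 :=
              Finset.card_erase_of_mem hjC
            have hCpos : 0 < C.card := Finset.card_pos.mpr ⟨j, hjC⟩
            have hlt : (C.erase j).card < W.card := by omega
            have hmaps : ∀ c ∈ W, (fun c =>
                if h : ∃ t ∈ C.erase j, ∃ c',
                    Function.update (Function.update u k c) t c' ∈ B
                then h.choose else j) c ∈ C.erase j := by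
              intro c hcW
              have hc : c ≠ u k := (Finset.mem_erase.mp hcW).1
              have h := key c hc
              simp only [dif_pos h]
              exact h.choose_spec.1
            obtain ⟨c1, hc1, c2, hc2, hne, heq⟩ :=
              Finset.exists_ne_map_eq_of_card_lt_of_maps_to hlt hmaps
            have h1 := key c1 (Finset.mem_erase.mp hc1).1
            have h2 := key c2 (Finset.mem_erase.mp hc2).1
            simp only [dif_pos h1, dif_pos h2] at heq
            obtain ⟨ht1, c1', hz1⟩ := h1.choose_spec
            obtain ⟨ht2, c2', hz2⟩ := h2.choose_spec
            rw [heq] at hz1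
            have htk : h2.choose ≠ k := fun h =>
              hkC (h ▸ (Finset.mem_erase.mp ht2).2)
            exact hne (hAB.block htk hz1 hz2)
          · -- partner stays in the subcube
            refine ⟨Function.update u j e, Finset.mem_inter.mpr ⟨hP, mem_Qf.mpr fun i hi => ?_⟩⟩
            have hij : i ≠ j := fun h => hjC (h ▸ hi)
            rw [Function.update_of_ne hij]
        obtain ⟨b, hb⟩ := this
        simpa [Nat.factorial] using Finset.card_pos.mpr ⟨b, hb⟩
    · -- inductive step
      have hd1 : 1 ≤ d := Nat.one_le_iff_ne_zero.mpr hd0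
      -- pick k ∉ C with k ≠ j
      have hkex : ((insert j C)ᶜ : Finset (Fin (q+1))).Nonempty := by
        rw [← Finset.card_pos, Finset.card_compl]
        have h1 := Finset.card_insert_le j C
        simp only [Finset.card_univ, Fintype.card_fin]
        omega
      obtain ⟨k, hk⟩ := hkex
      have hkjC : k ∉ insert j C := Finset.mem_compl.mp hk
      have hkC : k ∉ C := fun h => hkjC (Finset.mem_insert_of_mem h)
      have hkj : k ≠ j := fun h => hkjC (h ▸ Finset.mem_insert_self j C)
      -- the set of good values
      set GV : Finset (Fin q) := Finset.univ.filter (fun c => ∃ v : V q,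
        (v ∈ A ∨ v ∈ B) ∧ (∀ i ∈ C, v i = u i) ∧ v k = c) with hGV
      have hukGV : u k ∈ GV := by
        rw [hGV]
        exact Finset.mem_filter.mpr ⟨Finset.mem_univ _,
          ⟨u, Or.inl hu, fun i _ => rfl, rfl⟩⟩
      -- bad values inject into C
      have hbadkey : ∀ c : Fin q, c ∉ GV →
          ∃ t ∈ C, ∃ c', Function.update (Function.update u k c) t c' ∈ B := by
        intro c hcbad
        have hc : c ≠ u k := fun h => hcbad (h ▸ hukGV)
        obtain ⟨k', c', hk'k, hk'j, hc', hzB⟩ := hAB.latin hu hej hP hPu hkj hc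
        have hk'C : k' ∈ C := by
          by_contra hk'C
          refine hcbad (Finset.mem_filter.mpr ⟨Finset.mem_univ _,
            ⟨Function.update (Function.update u k c) k' c', Or.inr hzB,
              fun i hi => ?_, ?_⟩⟩)
          · have hik : i ≠ k := fun h => hkC (h ▸ hi)
            have hik' : i ≠ k' := fun h => hk'C (h ▸ hi)
            rw [Function.update_of_ne hik', Function.update_of_ne hik]
          · rw [Function.update_of_ne (Ne.symm hk'k), Function.update_self]
        exact ⟨k', hk'C, c', hzB⟩
      have hbadcard : (Finset.univ \ GV).card ≤ C.card := by
        apply Finset.card_le_card_of_injOn (fun c =>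
          if h : ∃ t ∈ C, ∃ c', Function.update (Function.update u k c) t c' ∈ B
          then h.choose else j)
        · intro c hc
          have h := hbadkey c (Finset.mem_sdiff.mp hc).2
          simp only [dif_pos h]
          exact h.choose_spec.1
        · intro c1 hc1 c2 hc2 heq
          have h1 := hbadkey c1 (Finset.mem_sdiff.mp hc1).2
          have h2 := hbadkey c2 (Finset.mem_sdiff.mp hc2).2
          simp only [dif_pos h1, dif_pos h2] at heq
          obtain ⟨ht1, c1', hz1⟩ := h1.choose_spec
          obtain ⟨ht2, c2', hz2⟩ := h2.choose_spec
          rw [heq] at hz1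
          have htk : h2.choose ≠ k := fun h => hkC (h ▸ ht2)
          exact hAB.block htk hz1 hz2
      have hGVcard : d + 1 ≤ GV.card := by
        have h1 : (Finset.univ \ GV).card = q - GV.card := by
          rw [Finset.card_sdiff_of_subset (Finset.subset_univ GV)]
          simp
        have h2 : GV.card ≤ q := by
          simpa using Finset.card_le_univ GV
        omega
      -- fibre bounds
      have hfib : ∀ c ∈ GV,
          Nat.factorial d ≤ ((A ∩ Qf q C u).filter (fun x => x k = c)).card ∧
          Nat.factorial d ≤ ((B ∩ Qf q C u).filter (fun x => x k = c)).card := by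
        intro c hcGV
        rw [hGV] at hcGV
        obtain ⟨-, v, hvAB, hvC, hvk⟩ := Finset.mem_filter.mp hcGV
        have hC' : (insert k C).card + d = q := by
          rw [Finset.card_insert_of_notMem hkC]; omega
        have hsub : ∀ (D : Finset (V q)), D ∩ Qf q (insert k C) v ⊆
            (D ∩ Qf q C u).filter (fun x => x k = c) := by
          intro D x hx
          obtain ⟨hxD, hxQ⟩ := Finset.mem_inter.mp hx
          have hxQ' := mem_Qf.mp hxQ
          refine Finset.mem_filter.mpr ⟨Finset.mem_inter.mpr ⟨hxD, mem_Qf.mpr fun i hi => ?_⟩, ?_⟩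
          · rw [hxQ' i (Finset.mem_insert_of_mem hi), hvC i hi]
          · rw [hxQ' k (Finset.mem_insert_self k C), hvk]
        rcases hvAB with hvA | hvB
        · obtain ⟨ihA, ihB⟩ := ih hd1 A B hAB (insert k C) v hC' hvA
          exact ⟨le_trans ihA (Finset.card_le_card (hsub A)),
            le_trans ihB (Finset.card_le_card (hsub B))⟩
        · obtain ⟨ihB, ihA⟩ := ih hd1 B A hAB.symm (insert k C) v hC' hvB
          exact ⟨le_trans ihA (Finset.card_le_card (hsub A)),
            le_trans ihB (Finset.card_le_card (hsub B))⟩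
      -- summation
      have hsum : ∀ (D : Finset (V q)),
          (∀ c ∈ GV, Nat.factorial d ≤
            ((D ∩ Qf q C u).filter (fun x => x k = c)).card) →
          Nat.factorial (d + 1) ≤ (D ∩ Qf q C u).card := by
        intro D hDfib
        have h1 : (D ∩ Qf q C u).card =
            ∑ c : Fin q, ((D ∩ Qf q C u).filter (fun x => x k = c)).card :=
          Finset.card_eq_sum_card_fiberwise (f := fun x : V q => x k)
            (t := Finset.univ) (fun x _ => Finset.mem_univ _)
        have h2 : ∑ c ∈ GV, ((D ∩ Qf q C u).filter (fun x => x k = c)).card ≤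
            ∑ c : Fin q, ((D ∩ Qf q C u).filter (fun x => x k = c)).card :=
          Finset.sum_le_sum_of_subset (Finset.subset_univ GV)
        have h3 : GV.card * Nat.factorial d ≤
            ∑ c ∈ GV, ((D ∩ Qf q C u).filter (fun x => x k = c)).card := by
          calc GV.card * Nat.factorial d
              = ∑ _c ∈ GV, Nat.factorial d := by
                rw [Finset.sum_const, smul_eq_mul]
            _ ≤ _ := Finset.sum_le_sum hDfib
        have h4 : Nat.factorial (d + 1) ≤ GV.card * Nat.factorial d := by
          rw [Nat.factorial_succ]
          exact Nat.mul_le_mul hGVcard le_rfl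
        rw [h1]
        exact le_trans h4 (le_trans h3 h2)
      exact ⟨hsum A (fun c hc => (hfib c hc).1), hsum B (fun c hc => (hfib c hc).2)⟩

end St15

/-- For `q ≥ 3`, every (nonempty) perfect bitrade in `H(q+1,q)` has volume
at least `q!`. -/
theorem statement15 (q : ℕ) (hq : 3 ≤ q) (T0 T1 : Set (Fin (q + 1) → Fin q))
    (hbt : IsPerfectBitrade (hammingGraph (q + 1) q) T0 T1) :
    Nat.factorial q ≤ T0.ncard := by
  classical
  obtain ⟨hdisj, hT0ne, hT1ne, hbal⟩ := hbt
  have hgp : St15.GoodPair q T0.toFinset T1.toFinset := by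
    constructor
    · rw [Set.disjoint_toFinset]; exact hdisj
    · intro x
      rcases hbal x with ⟨h1, h2⟩ | h
      · refine Or.inl ⟨?_, ?_⟩
        · simpa only [Set.mem_toFinset] using h1
        · simpa only [Set.mem_toFinset] using h2
      · refine Or.inr fun y hy => h y ?_
        rcases hy with hy | hy
        · exact Set.mem_union_left _ (Set.mem_toFinset.mp hy)
        · exact Set.mem_union_right _ (Set.mem_toFinset.mp hy)
  obtain ⟨u0, hu0⟩ := hT0ne
  have hmain := St15.main q (by omega) T0.toFinset T1.toFinset hgp ∅ u0
    (by simp) (Set.mem_toFinset.mpr hu0)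
  have hQ : St15.Qf q ∅ u0 = Finset.univ := by
    ext x; simp [St15.Qf]
  rw [hQ, Finset.inter_univ] at hmain
  rw [Set.ncard_eq_toFinset_card']
  exact hmain.1
end

section
/- Let q ≥ 3. The volume of any nonempty spherical bitrade in the Hamming graph H(q, q) is at least q!/2. -/
open scoped BigOperators

/- ===================== Auxiliary development ===================== -/

namespace StTrade16

open Finset Function
open scoped Classical

variable {q : ℕ}

theorem sign_aux (u v : ℤ) (hu : u = 0 ∨ u = 1 ∨ u = -1) (hv : v = 0 ∨ v = 1 ∨ v = -1)
    (hne : u ≠ -v) : 0 ≤ u * v := by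
  rcases hu with rfl|rfl|rfl <;> rcases hv with rfl|rfl|rfl <;> omega

theorem hd_update (x : Fin q → Fin q) (k : Fin q) (c : Fin q) (h : c ≠ x k) :
    hammingDist x (Function.update x k c) = 1 := by
  rw [hammingDist]
  rw [show ({i | x i ≠ Function.update x k c i} : Finset (Fin q)) = {k} by
    ext m
    simp only [Finset.mem_filter, Finset.mem_univ, true_and, Finset.mem_singleton]
    constructor
    · intro hm; by_contra hmk; exact hm (by rw [Function.update_of_ne hmk])
    · intro hm; subst hm; simp [h.symm]]
  simp

theorem hd_one_iff (x y : Fin q → Fin q) (h : hammingDist x y = 1) :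
    ∃ k, y k ≠ x k ∧ y = Function.update x k (y k) := by
  rw [hammingDist, Finset.card_eq_one] at h
  obtain ⟨k, hk⟩ := h
  have hkmem : k ∈ ({i | x i ≠ y i} : Finset (Fin q)) := by
    rw [hk]; exact Finset.mem_singleton_self k
  simp only [mem_filter, mem_univ, true_and] at hkmem
  refine ⟨k, Ne.symm hkmem, ?_⟩
  ext m
  rcases eq_or_ne m k with rfl | hm
  · simp
  · rw [Function.update_of_ne hm]
    by_contra hne
    have : m ∈ ({i | x i ≠ y i} : Finset (Fin q)) := by
      simp only [mem_filter, mem_univ, true_and]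
      exact fun he => hne (congrArg Fin.val he.symm)
    rw [hk, Finset.mem_singleton] at this; exact hm this

theorem rein2 (g : (Fin q → Fin q) → ℤ) (k : Fin q) :
    ∑ p : Fin q × (Fin q → Fin q), g (Function.update p.2 k p.1)
      = q * ∑ t : Fin q → Fin q, g t := by
  have hbij : Function.Bijective
      (fun p : Fin q × (Fin q → Fin q) => ((p.2 k, Function.update p.2 k p.1) :
        Fin q × (Fin q → Fin q))) := by
    constructor
    · rintro ⟨c, t⟩ ⟨c', t'⟩ h
      simp only [Prod.mk.injEq] at h
      obtain ⟨h1, h2⟩ := h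
      have hc : c = c' := by
        have := congrFun h2 k; simpa using this
      subst hc
      refine Prod.ext rfl ?_
      dsimp only
      funext m
      rcases eq_or_ne m k with rfl | hm
      · exact h1
      · have := congrFun h2 m
        rwa [Function.update_of_ne hm, Function.update_of_ne hm] at this
    · rintro ⟨d, s⟩
      refine ⟨⟨s k, Function.update s k d⟩, ?_⟩
      simp only [Prod.mk.injEq]
      constructor
      · simp
      · funext m
        rcases eq_or_ne m k with rfl | hm
        · simp
        · simp [Function.update_of_ne hm]
  have key := Function.Bijective.sum_comp hbij (fun pr : Fin q × (Fin q → Fin q) => g pr.2)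
  simp only at key
  rw [key, Fintype.sum_prod_type]
  simp [Finset.card_univ, mul_comm]

variable (S0 S1 : Set (Fin q → Fin q))

/-- The ±1/0 weight function of the bitrade. -/
noncomputable def ff : (Fin q → Fin q) → ℤ :=
  fun x => (if x ∈ S0 then 1 else 0) - (if x ∈ S1 then 1 else 0)

/-- The sphere of radius 1 around `x`, as a finset. -/
noncomputable def sph (x : Fin q → Fin q) : Finset (Fin q → Fin q) :=
  {y | hammingDist x y = 1}

theorem mem_sph {x y : Fin q → Fin q} : y ∈ sph x ↔ hammingDist x y = 1 := by
  simp [sph]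

theorem ff_S0 (hd : Disjoint S0 S1) {x : Fin q → Fin q} (h : x ∈ S0) : ff S0 S1 x = 1 := by
  have : x ∉ S1 := fun h1 => (Set.disjoint_left.mp hd) h h1
  simp [ff, h, this]

theorem ff_S1 (hd : Disjoint S0 S1) {x : Fin q → Fin q} (h : x ∈ S1) : ff S0 S1 x = -1 := by
  have : x ∉ S0 := fun h1 => (Set.disjoint_left.mp hd) h1 h
  simp [ff, h, this]

theorem ff_eq_zero {x : Fin q → Fin q} (h0 : x ∉ S0) (h1 : x ∉ S1) : ff S0 S1 x = 0 := by
  simp [ff, h0, h1]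

theorem ff_ne_zero_iff (hd : Disjoint S0 S1) {x : Fin q → Fin q} :
    ff S0 S1 x ≠ 0 ↔ x ∈ S0 ∪ S1 := by
  constructor
  · intro h
    by_contra hc
    rw [Set.mem_union] at hc
    push_neg at hc
    exact h (ff_eq_zero S0 S1 hc.1 hc.2)
  · rintro (h | h)
    · rw [ff_S0 S0 S1 hd h]; norm_num
    · rw [ff_S1 S0 S1 hd h]; norm_num

theorem ff_cases (x : Fin q → Fin q) : ff S0 S1 x = 0 ∨ ff S0 S1 x = 1 ∨ ff S0 S1 x = -1 := by
  unfold ff; split_ifs <;> simp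

theorem mem_S0_of_ff (hd : Disjoint S0 S1) {x : Fin q → Fin q} (h : ff S0 S1 x = 1) :
    x ∈ S0 := by
  by_contra h0
  by_cases h1 : x ∈ S1
  · rw [ff_S1 S0 S1 hd h1] at h; norm_num at h
  · rw [ff_eq_zero S0 S1 h0 h1] at h; norm_num at h

theorem mem_S1_of_ff (hd : Disjoint S0 S1) {x : Fin q → Fin q} (h : ff S0 S1 x = -1) :
    x ∈ S1 := by
  by_contra h1
  by_cases h0 : x ∈ S0
  · rw [ff_S0 S0 S1 hd h0] at h; norm_num at h
  · rw [ff_eq_zero S0 S1 h0 h1] at h; norm_num at h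

/-- The sum of `ff` over any sphere is zero. -/
theorem sph_sum (hbt : IsSphericalBitrade (hammingGraph q q) S0 S1) (x : Fin q → Fin q) :
    ∑ y ∈ sph x, ff S0 S1 y = 0 := by
  obtain ⟨hd, -, -, hx⟩ := hbt
  have hsum : ∑ y ∈ sph x, ff S0 S1 y =
      ((sph x).filter (· ∈ S0)).card - ((sph x).filter (· ∈ S1)).card := by
    unfold ff
    rw [Finset.sum_sub_distrib]
    congr 1 <;> simp [Finset.sum_boole]
  rcases hx x with ⟨⟨y0, hy0, hy0u⟩, ⟨y1, hy1, hy1u⟩⟩ | hnone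
  · have h0 : (sph x).filter (· ∈ S0) = {y0} := by
      ext z
      simp only [Finset.mem_filter, Finset.mem_singleton, mem_sph]
      constructor
      · intro ⟨hz1, hz2⟩; exact hy0u z ⟨hz2, hz1⟩
      · rintro rfl; exact ⟨hy0.2, hy0.1⟩
    have h1 : (sph x).filter (· ∈ S1) = {y1} := by
      ext z
      simp only [Finset.mem_filter, Finset.mem_singleton, mem_sph]
      constructor
      · intro ⟨hz1, hz2⟩; exact hy1u z ⟨hz2, hz1⟩
      · rintro rfl; exact ⟨hy1.2, hy1.1⟩
    rw [hsum, h0, h1]; simp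
  · rw [hsum]
    have h0 : (sph x).filter (· ∈ S0) = ∅ := by
      ext z
      simp only [Finset.mem_filter, Finset.notMem_empty, iff_false, not_and, mem_sph]
      intro hz hzS; exact hnone z (Set.mem_union_left _ hzS) hz
    have h1 : (sph x).filter (· ∈ S1) = ∅ := by
      ext z
      simp only [Finset.mem_filter, Finset.notMem_empty, iff_false, not_and, mem_sph]
      intro hz hzS; exact hnone z (Set.mem_union_right _ hzS) hz
    rw [h0, h1]; simp

theorem sph_sum_eq (g : (Fin q → Fin q) → ℤ) (x : Fin q → Fin q) :
    ∑ p ∈ (Finset.univ : Finset (Fin q)).sigma (fun k => Finset.univ.erase (x k)),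
      g (Function.update x p.1 p.2) = ∑ y ∈ sph x, g y := by
  apply Finset.sum_bij (fun (p : (_ : Fin q) × Fin q) _ => Function.update x p.1 p.2)
  · rintro ⟨k, c⟩ hp
    simp only [Finset.mem_sigma, Finset.mem_univ, Finset.mem_erase, true_and] at hp
    exact mem_sph.mpr (hd_update x k c hp.1)
  · rintro ⟨k, c⟩ hp ⟨k', c'⟩ hp' heq
    simp only [Finset.mem_sigma, Finset.mem_univ, Finset.mem_erase, and_true, true_and] at hp hp'
    dsimp only at heq
    have hkk : k = k' := by
      by_contra hne
      have h1 := congrFun heq k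
      rw [Function.update_self, Function.update_of_ne hne] at h1
      exact hp h1
    subst hkk
    have h1 := congrFun heq k
    rw [Function.update_self, Function.update_self] at h1
    rw [h1]
  · intro y hy
    obtain ⟨k, hk1, hk2⟩ := hd_one_iff x y (mem_sph.mp hy)
    refine ⟨⟨k, y k⟩, ?_, hk2.symm⟩
    simp [hk1]
  · intros; rfl

/-- Pointwise line-sum identity for the bitrade function. -/
theorem Nplus (hbt : IsSphericalBitrade (hammingGraph q q) S0 S1) (x : Fin q → Fin q) :
    ∑ k : Fin q, ∑ c : Fin q, ff S0 S1 (Function.update x k c) = q * ff S0 S1 x := by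
  have key : ∀ k : Fin q, ∑ c : Fin q, ff S0 S1 (Function.update x k c) =
      ff S0 S1 x + ∑ c ∈ Finset.univ.erase (x k), ff S0 S1 (Function.update x k c) := by
    intro k
    rw [← Finset.add_sum_erase _ _ (Finset.mem_univ (x k))]
    congr 1
    rw [Function.update_eq_self]
  calc ∑ k : Fin q, ∑ c : Fin q, ff S0 S1 (Function.update x k c)
      = ∑ k : Fin q, (ff S0 S1 x +
          ∑ c ∈ Finset.univ.erase (x k), ff S0 S1 (Function.update x k c)) :=
        Finset.sum_congr rfl (fun k _ => key k)
    _ = (q : ℤ) * ff S0 S1 x + ∑ k : Fin q,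
          ∑ c ∈ Finset.univ.erase (x k), ff S0 S1 (Function.update x k c) := by
        rw [Finset.sum_add_distrib]; simp [mul_comm]
    _ = q * ff S0 S1 x := by
        rw [Finset.sum_sigma']
        rw [sph_sum_eq (ff S0 S1) x, sph_sum S0 S1 hbt x, add_zero]

theorem NplusP (hbt : IsSphericalBitrade (hammingGraph q q) S0 S1) (x : Fin q → Fin q) :
    ∑ r : Fin q × Fin q, ff S0 S1 (Function.update x r.1 r.2) = q * ff S0 S1 x := by
  rw [Fintype.sum_prod_type]
  exact Nplus S0 S1 hbt x

end StTrade16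

namespace StTrade16

open Finset Function
open scoped Classical

variable {q : ℕ} (F : (Fin q → Fin q) → ℤ)

/-- A plane sum of `F`. -/
noncomputable def Sp (i j : Fin q) (t : Fin q → Fin q) : ℤ :=
  ∑ p : Fin q × Fin q, F (Function.update (Function.update t i p.1) j p.2)

theorem Sp_pair (i j : Fin q) (t : Fin q → Fin q) :
    Sp F i j t = ∑ a : Fin q, ∑ b : Fin q,
      F (Function.update (Function.update t i a) j b) := by
  rw [Sp, Fintype.sum_prod_type]

theorem Sp_update_other (i j : Fin q) (t : Fin q → Fin q) (k : Fin q)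
    (hk1 : k ≠ i) (hk2 : k ≠ j) (c : Fin q) :
    Sp F i j (Function.update t k c) =
      ∑ p : Fin q × Fin q,
        F (Function.update (Function.update (Function.update t i p.1) j p.2) k c) := by
  unfold Sp
  exact Finset.sum_congr rfl (fun p _ => by
    rw [Function.update_comm hk1, Function.update_comm hk2])

theorem Rrel (i j : Fin q) (hij : i ≠ j)
    (hN : ∀ x, ∑ r : Fin q × Fin q, F (Function.update x r.1 r.2) = q * F x)
    (t : Fin q → Fin q) :
    ∑ k ∈ (Finset.univ.erase i).erase j, ∑ c : Fin q, Sp F i j (Function.update t k c)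
      = -(q : ℤ) * Sp F i j t := by
  have hsplit : ∀ G : Fin q → ℤ, ∑ k : Fin q, G k
      = G i + G j + ∑ k ∈ (Finset.univ.erase i).erase j, G k := by
    intro G
    rw [← Finset.add_sum_erase _ _ (Finset.mem_univ i)]
    rw [← Finset.add_sum_erase _ _ (Finset.mem_erase.mpr ⟨Ne.symm hij, Finset.mem_univ j⟩)]
    ring
  have h1 : ∑ p : Fin q × Fin q, ∑ r : Fin q × Fin q,
      F (Function.update (Function.update (Function.update t i p.1) j p.2) r.1 r.2)
      = (q : ℤ) * Sp F i j t := by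
    rw [show ((q:ℤ) * Sp F i j t) = ∑ p : Fin q × Fin q,
      (q : ℤ) * F (Function.update (Function.update t i p.1) j p.2) by
        rw [Sp, Finset.mul_sum]]
    exact Finset.sum_congr rfl (fun p _ => hN _)
  rw [Finset.sum_comm] at h1
  rw [Fintype.sum_prod_type] at h1
  rw [hsplit (fun k => ∑ c : Fin q, ∑ p : Fin q × Fin q,
      F (Function.update (Function.update (Function.update t i p.1) j p.2) k c))] at h1
  have hi : ∑ c : Fin q, ∑ p : Fin q × Fin q,
      F (Function.update (Function.update (Function.update t i p.1) j p.2) i c)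
      = (q : ℤ) * Sp F i j t := by
    have hc : ∀ c : Fin q, ∑ p : Fin q × Fin q,
        F (Function.update (Function.update (Function.update t i p.1) j p.2) i c)
        = (q : ℤ) * ∑ b : Fin q, F (Function.update (Function.update t i c) j b) := by
      intro c
      rw [Fintype.sum_prod_type]
      have hterm : ∀ a b : Fin q,
          F (Function.update (Function.update (Function.update t i a) j b) i c)
          = F (Function.update (Function.update t i c) j b) := by
        intro a b
        rw [Function.update_comm (Ne.symm hij), Function.update_idem]
      simp only [hterm]
      rw [Finset.sum_const, Finset.card_univ, Fintype.card_fin, nsmul_eq_mul]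
    rw [Finset.sum_congr rfl (fun c _ => hc c), ← Finset.mul_sum, Sp_pair]
  have hj : ∑ c : Fin q, ∑ p : Fin q × Fin q,
      F (Function.update (Function.update (Function.update t i p.1) j p.2) j c)
      = (q : ℤ) * Sp F i j t := by
    have hc : ∀ c : Fin q, ∑ p : Fin q × Fin q,
        F (Function.update (Function.update (Function.update t i p.1) j p.2) j c)
        = (q : ℤ) * ∑ a : Fin q, F (Function.update (Function.update t i a) j c) := by
      intro c
      rw [Fintype.sum_prod_type]
      have hterm : ∀ a b : Fin q,
          F (Function.update (Function.update (Function.update t i a) j b) j c)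
          = F (Function.update (Function.update t i a) j c) := by
        intro a b
        rw [Function.update_idem]
      simp only [hterm]
      simp only [Finset.sum_const, Finset.card_univ, Fintype.card_fin, nsmul_eq_mul]
      rw [Finset.mul_sum]
    rw [Finset.sum_congr rfl (fun c _ => hc c), ← Finset.mul_sum]
    congr 1
    rw [Sp_pair, Finset.sum_comm]
  have hrest : ∀ k ∈ (Finset.univ.erase i).erase j, ∑ c : Fin q, ∑ p : Fin q × Fin q,
      F (Function.update (Function.update (Function.update t i p.1) j p.2) k c)
      = ∑ c : Fin q, Sp F i j (Function.update t k c) := by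
    intro k hk
    simp only [Finset.mem_erase] at hk
    exact Finset.sum_congr rfl (fun c _ =>
      (Sp_update_other F i j t k hk.2.1 hk.1 c).symm)
  rw [Finset.sum_congr rfl hrest, hi, hj] at h1
  linarith [h1]

noncomputable def Lk (i j k : Fin q) (t : Fin q → Fin q) : ℤ :=
  ∑ c : Fin q, Sp F i j (Function.update t k c)

theorem Lk_update (i j k : Fin q) (t : Fin q → Fin q) (c : Fin q) :
    Lk F i j k (Function.update t k c) = Lk F i j k t := by
  unfold Lk
  exact Finset.sum_congr rfl (fun c' _ => by rw [Function.update_idem])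

theorem Xk_nonneg (hq : 0 < q) (i j k : Fin q) :
    0 ≤ ∑ t : Fin q → Fin q, Sp F i j t * Lk F i j k t := by
  have h2 : ∑ t : Fin q → Fin q, (Lk F i j k t)^2
      = (q : ℤ) * ∑ t : Fin q → Fin q, Sp F i j t * Lk F i j k t := by
    calc ∑ t : Fin q → Fin q, (Lk F i j k t)^2
        = ∑ t : Fin q → Fin q, ∑ c : Fin q,
            Lk F i j k (Function.update t k c) * Sp F i j (Function.update t k c) := by
          apply Finset.sum_congr rfl
          intro t _
          rw [sq]
          calc Lk F i j k t * Lk F i j k t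
              = Lk F i j k t * ∑ c : Fin q, Sp F i j (Function.update t k c) := rfl
            _ = ∑ c : Fin q, Lk F i j k t * Sp F i j (Function.update t k c) :=
                Finset.mul_sum _ _ _
            _ = ∑ c : Fin q, Lk F i j k (Function.update t k c) *
                  Sp F i j (Function.update t k c) :=
                Finset.sum_congr rfl (fun c _ => by rw [Lk_update])
      _ = ∑ p : Fin q × (Fin q → Fin q),
            Lk F i j k (Function.update p.2 k p.1) * Sp F i j (Function.update p.2 k p.1) := by
          rw [Fintype.sum_prod_type, Finset.sum_comm]
      _ = (q : ℤ) * ∑ t : Fin q → Fin q, Lk F i j k t * Sp F i j t :=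
          rein2 (fun s => Lk F i j k s * Sp F i j s) k
      _ = (q : ℤ) * ∑ t : Fin q → Fin q, Sp F i j t * Lk F i j k t := by
          congr 1; exact Finset.sum_congr rfl (fun t _ => mul_comm _ _)
  have hsq : (0:ℤ) ≤ ∑ t : Fin q → Fin q, (Lk F i j k t)^2 :=
    Finset.sum_nonneg (fun t _ => sq_nonneg _)
  by_contra hcon
  push_neg at hcon
  have hqz : (0:ℤ) < q := by exact_mod_cast hq
  nlinarith [h2, hsq, hcon]

theorem Sp_eq_zero (hq : 0 < q) (i j : Fin q) (hij : i ≠ j)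
    (hN : ∀ x, ∑ r : Fin q × Fin q, F (Function.update x r.1 r.2) = q * F x)
    (t : Fin q → Fin q) : Sp F i j t = 0 := by
  have hXsum : (0:ℤ) ≤ ∑ k ∈ (Finset.univ.erase i).erase j,
      ∑ t : Fin q → Fin q, Sp F i j t * Lk F i j k t :=
    Finset.sum_nonneg (fun k _ => Xk_nonneg F hq i j k)
  have heq : ∑ k ∈ (Finset.univ.erase i).erase j,
      ∑ t : Fin q → Fin q, Sp F i j t * Lk F i j k t
      = -(q:ℤ) * ∑ t : Fin q → Fin q, (Sp F i j t)^2 := by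
    rw [Finset.sum_comm]
    rw [Finset.mul_sum]
    apply Finset.sum_congr rfl
    intro u _
    rw [← Finset.mul_sum]
    rw [show ∑ k ∈ (Finset.univ.erase i).erase j, Lk F i j k u
        = -(q:ℤ) * Sp F i j u from Rrel F i j hij hN u]
    ring
  have hsq : (0:ℤ) ≤ ∑ u : Fin q → Fin q, (Sp F i j u)^2 :=
    Finset.sum_nonneg (fun u _ => sq_nonneg _)
  have hqz : (0:ℤ) < q := by exact_mod_cast hq
  have hzero : ∑ u : Fin q → Fin q, (Sp F i j u)^2 = 0 := by nlinarith [hXsum, heq, hsq]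
  have hall := (Finset.sum_eq_zero_iff_of_nonneg
    (fun u _ => sq_nonneg (Sp F i j u))).mp hzero
  exact (pow_eq_zero_iff two_ne_zero).mp (hall t (Finset.mem_univ t))

end StTrade16

namespace StTrade16

open Finset Function
open scoped Classical Nat

variable {q : ℕ} (S0 S1 : Set (Fin q → Fin q))

/-- Every axis plane is balanced. -/
theorem balance (hq0 : 0 < q) (hbt : IsSphericalBitrade (hammingGraph q q) S0 S1)
    (i j : Fin q) (hij : i ≠ j) (t : Fin q → Fin q) :
    ∑ p : Fin q × Fin q, ff S0 S1 (Function.update (Function.update t i p.1) j p.2) = 0 :=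
  Sp_eq_zero (ff S0 S1) hq0 i j hij (NplusP S0 S1 hbt) t

/-- Two support points in the same part cannot be adjacent. -/
theorem Lsame (hq : 3 ≤ q) (hbt : IsSphericalBitrade (hammingGraph q q) S0 S1)
    (u : Fin q → Fin q) (k : Fin q) (c : Fin q) (hc : c ≠ u k)
    (hmem : (u ∈ S0 ∧ Function.update u k c ∈ S0) ∨
      (u ∈ S1 ∧ Function.update u k c ∈ S1)) :
    False := by
  obtain ⟨hd, -, -, hsph⟩ := hbt
  set w := Function.update u k c with hw
  have hex : ∃ e : Fin q, e ∉ ({u k, c} : Finset (Fin q)) := by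
    by_contra hcon
    push_neg at hcon
    have hsub : (Finset.univ : Finset (Fin q)) ⊆ {u k, c} := fun e _ => hcon e
    have hcard := Finset.card_le_card hsub
    rw [Finset.card_univ, Fintype.card_fin] at hcard
    have : ({u k, c} : Finset (Fin q)).card ≤ 2 :=
      le_trans (Finset.card_insert_le _ _) (by simp)
    omega
  obtain ⟨e, he⟩ := hex
  simp only [Finset.mem_insert, Finset.mem_singleton, not_or] at he
  set z := Function.update u k e with hz
  have hadj1 : (hammingGraph q q).Adj z u := by
    show hammingDist z u = 1
    rw [hammingDist_comm]
    exact hd_update u k e he.1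
  have hadj2 : (hammingGraph q q).Adj z w := by
    show hammingDist z w = 1
    have : z = Function.update w k e := by
      rw [hw, hz, Function.update_idem]
    rw [hammingDist_comm, this]
    exact hd_update w k e (by rw [hw, Function.update_self]; exact he.2)
  have huw : u ≠ w := by
    intro h
    have := congrFun h k
    rw [hw, Function.update_self] at this
    exact hc this.symm
  rcases hsph z with ⟨⟨y0, -, hu0⟩, ⟨y1, -, hu1⟩⟩ | hnone
  · rcases hmem with ⟨h1, h2⟩ | ⟨h1, h2⟩
    · exact huw ((hu0 u ⟨h1, hadj1⟩).trans (hu0 w ⟨h2, hadj2⟩).symm)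
    · exact huw ((hu1 u ⟨h1, hadj1⟩).trans (hu1 w ⟨h2, hadj2⟩).symm)
  · rcases hmem with ⟨h1, -⟩ | ⟨h1, -⟩
    · exact hnone u (Set.mem_union_left _ h1) hadj1
    · exact hnone u (Set.mem_union_right _ h1) hadj1

/-- A mixed pair cannot be adjacent either. -/
theorem Lmixed (hq : 3 ≤ q) (hbt : IsSphericalBitrade (hammingGraph q q) S0 S1)
    (u w : Fin q → Fin q) (hu : u ∈ S0) (hw : w ∈ S1) (hdist : hammingDist u w = 1) :
    False := by
  obtain ⟨hd, -, -, hsph⟩ := hbt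
  have hadj : (hammingGraph q q).Adj u w := hdist
  rcases hsph u with ⟨⟨y0, ⟨hy0S, hy0adj⟩, -⟩, -⟩ | hnone
  · have hyd : hammingDist u y0 = 1 := hy0adj
    obtain ⟨k, hk1, hk2⟩ := hd_one_iff u y0 hyd
    exact Lsame S0 S1 hq ⟨hd, ⟨u, hu⟩, ⟨w, hw⟩, hsph⟩ u k (y0 k) hk1
      (Or.inl ⟨hu, by rw [← hk2]; exact hy0S⟩)
  · exact hnone w (Set.mem_union_right _ hw) hadj

/-- No two support points are adjacent. -/
theorem Lnonadj (hq : 3 ≤ q) (hbt : IsSphericalBitrade (hammingGraph q q) S0 S1)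
    (u : Fin q → Fin q) (k : Fin q) (c : Fin q) (hc : c ≠ u k)
    (hu : ff S0 S1 u ≠ 0) (hw : ff S0 S1 (Function.update u k c) ≠ 0) : False := by
  have hd := hbt.1
  set w := Function.update u k c with hwdef
  have hu' := (ff_ne_zero_iff S0 S1 hd).mp hu
  have hw' := (ff_ne_zero_iff S0 S1 hd).mp hw
  have hdist : hammingDist u w = 1 := hd_update u k c hc
  rcases hu' with hu0 | hu1 <;> rcases hw' with hw0 | hw1
  · exact Lsame S0 S1 hq hbt u k c hc (Or.inl ⟨hu0, hw0⟩)
  · exact Lmixed S0 S1 hq hbt u w hu0 hw1 hdist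
  · exact Lmixed S0 S1 hq hbt w u hw0 hu1 (by rw [hammingDist_comm]; exact hdist)
  · exact Lsame S0 S1 hq hbt u k c hc (Or.inr ⟨hu1, hw1⟩)

/-- Same-sign points at distance two are forbidden. -/
theorem F2 (hq : 3 ≤ q) (hbt : IsSphericalBitrade (hammingGraph q q) S0 S1)
    (y : Fin q → Fin q) (i j a b : Fin q) (hij : i ≠ j) (ha : a ≠ y i) (hb : b ≠ y j)
    (hy : ff S0 S1 y ≠ 0) :
    ff S0 S1 (Function.update (Function.update y i a) j b) ≠ ff S0 S1 y := by
  intro hEq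
  obtain ⟨hd, -, -, hsph⟩ := hbt
  set z := Function.update y i a with hz
  set w := Function.update z j b with hw
  have hadj1 : (hammingGraph q q).Adj z y := by
    show hammingDist z y = 1
    rw [hammingDist_comm]; exact hd_update y i a ha
  have hadj2 : (hammingGraph q q).Adj z w := by
    show hammingDist z w = 1
    exact hd_update z j b (by rw [hz, Function.update_of_ne (Ne.symm hij)]; exact hb)
  have hyw : y ≠ w := by
    intro h
    have := congrFun h i
    rw [hw, hz, Function.update_of_ne hij, Function.update_self] at this
    exact ha this.symm
  rcases ff_cases S0 S1 y with h0 | h1 | hm1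
  · exact hy h0
  · have hyS := mem_S0_of_ff S0 S1 hd h1
    have hwS := mem_S0_of_ff S0 S1 hd (by rw [hEq]; exact h1)
    rcases hsph z with ⟨⟨y0, -, hu0⟩, -⟩ | hnone
    · exact hyw ((hu0 y ⟨hyS, hadj1⟩).trans (hu0 w ⟨hwS, hadj2⟩).symm)
    · exact hnone y (Set.mem_union_left _ hyS) hadj1
  · have hyS := mem_S1_of_ff S0 S1 hd hm1
    have hwS := mem_S1_of_ff S0 S1 hd (by rw [hEq]; exact hm1)
    rcases hsph z with ⟨-, ⟨y1, -, hu1⟩⟩ | hnone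
    · exact hyw ((hu1 y ⟨hyS, hadj1⟩).trans (hu1 w ⟨hwS, hadj2⟩).symm)
    · exact hnone y (Set.mem_union_right _ hyS) hadj1

/-- Partner existence: every support point has an opposite-sign partner in
each axis plane through it. -/
theorem F1 (hq : 3 ≤ q) (hbt : IsSphericalBitrade (hammingGraph q q) S0 S1)
    (x : Fin q → Fin q) (i j : Fin q) (hij : i ≠ j) (hx : ff S0 S1 x ≠ 0) :
    ∃ a b, a ≠ x i ∧ b ≠ x j ∧
      ff S0 S1 (Function.update (Function.update x i a) j b) = -ff S0 S1 x := by
  by_contra hcon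
  push_neg at hcon
  have hterm : ∀ p : Fin q × Fin q,
      0 ≤ ff S0 S1 (Function.update (Function.update x i p.1) j p.2) * ff S0 S1 x := by
    rintro ⟨a, b⟩
    dsimp only
    by_cases hai : a = x i <;> by_cases hbj : b = x j
    · subst hai; subst hbj
      rw [Function.update_eq_self, Function.update_eq_self]
      exact mul_self_nonneg _
    · subst hai
      rw [Function.update_eq_self]
      by_cases h0 : ff S0 S1 (Function.update x j b) = 0
      · rw [h0, zero_mul]
      · exact absurd (Lnonadj S0 S1 hq hbt x j b hbj hx h0) id
    · subst hbj
      rw [show Function.update (Function.update x i a) j (x j)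
          = Function.update x i a by
        rw [show x j = (Function.update x i a) j by rw [Function.update_of_ne (Ne.symm hij)]]
        exact Function.update_eq_self _ _]
      by_cases h0 : ff S0 S1 (Function.update x i a) = 0
      · rw [h0, zero_mul]
      · exact absurd (Lnonadj S0 S1 hq hbt x i a hai hx h0) id
    · exact sign_aux _ _ (ff_cases S0 S1 _) (ff_cases S0 S1 x) (hcon a b hai hbj)
  have hsum : ∑ p : Fin q × Fin q,
      ff S0 S1 (Function.update (Function.update x i p.1) j p.2) * ff S0 S1 x = 0 := by
    rw [← Finset.sum_mul, balance S0 S1 (by omega) hbt i j hij x, zero_mul]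
  have hall := (Finset.sum_eq_zero_iff_of_nonneg (fun p _ => hterm p)).mp hsum
  have hataa := hall (x i, x j) (Finset.mem_univ _)
  simp only [Function.update_eq_self] at hataa
  rcases mul_eq_zero.mp hataa with h | h <;> exact hx h

/-- The trace of the support on a subcube. -/
noncomputable def TQ (K : Finset (Fin q)) (t : Fin q → Fin q) : Finset (Fin q → Fin q) :=
  Finset.univ.filter (fun y => ff S0 S1 y ≠ 0 ∧ ∀ k, k ∉ K → y k = t k)

theorem mem_TQ {K : Finset (Fin q)} {t y : Fin q → Fin q} :
    y ∈ TQ S0 S1 K t ↔ ff S0 S1 y ≠ 0 ∧ ∀ k, k ∉ K → y k = t k := by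
  simp [TQ]

/-- Pigeonhole: a nonempty subcube trace takes at least `K.card` values in
each free coordinate. -/
theorem pigeon (hq : 3 ≤ q) (hbt : IsSphericalBitrade (hammingGraph q q) S0 S1)
    (K : Finset (Fin q)) (t : Fin q → Fin q) (i : Fin q) (hi : i ∈ K)
    (x : Fin q → Fin q) (hx : x ∈ TQ S0 S1 K t) :
    K.card ≤ ((TQ S0 S1 K t).image (fun y => y i)).card := by
  obtain ⟨hxf, hxQ⟩ := (mem_TQ S0 S1).mp hx
  set W := (TQ S0 S1 K t).image (fun y => y i) with hW
  by_contra hlt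
  push_neg at hlt
  have hpart : ∀ j ∈ K.erase i, ∃ y : Fin q → Fin q, y ∈ TQ S0 S1 K t ∧
      y i ≠ x i ∧ y j ≠ x j ∧ (∀ m, m ≠ i → m ≠ j → y m = x m) ∧
      ff S0 S1 y = -ff S0 S1 x := by
    intro j hj
    obtain ⟨hji, hjK⟩ := Finset.mem_erase.mp hj
    obtain ⟨a, b, ha, hb, hf⟩ := F1 S0 S1 hq hbt x i j (Ne.symm hji) hxf
    refine ⟨Function.update (Function.update x i a) j b, ?_, ?_, ?_, ?_, hf⟩
    · rw [mem_TQ]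
      constructor
      · rw [hf]; exact neg_ne_zero.mpr hxf
      · intro k hk
        have hki : k ≠ i := fun h => hk (h ▸ hi)
        have hkj : k ≠ j := fun h => hk (h ▸ hjK)
        rw [Function.update_of_ne hkj, Function.update_of_ne hki]
        exact hxQ k hk
    · rw [Function.update_of_ne (Ne.symm hji), Function.update_self]; exact ha
    · rw [Function.update_self]; exact hb
    · intro m hmi hmj
      rw [Function.update_of_ne hmj, Function.update_of_ne hmi]
  let phimap : Fin q → Fin q := fun j =>
    if h : j ∈ K.erase i then (Classical.choose (hpart j h)) i else x i
  have hmaps : ∀ j ∈ K.erase i, phimap j ∈ W.erase (x i) := by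
    intro j hj
    have hspec := Classical.choose_spec (hpart j hj)
    rw [Finset.mem_erase]
    simp only [phimap, dif_pos hj]
    exact ⟨hspec.2.1, Finset.mem_image_of_mem _ hspec.1⟩
  have hcards : (W.erase (x i)).card < (K.erase i).card := by
    have h1 : x i ∈ W := Finset.mem_image_of_mem _ hx
    have h2 := Finset.card_erase_of_mem h1
    have h3 := Finset.card_erase_of_mem hi
    have h4 : 1 ≤ W.card := Finset.card_pos.mpr ⟨x i, h1⟩
    have h5 : 1 ≤ K.card := Finset.card_pos.mpr ⟨i, hi⟩
    omega
  obtain ⟨j, hj, j', hj', hjj', hphi⟩ :=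
    Finset.exists_ne_map_eq_of_card_lt_of_maps_to hcards hmaps
  have hspec := Classical.choose_spec (hpart j hj)
  have hspec' := Classical.choose_spec (hpart j' hj')
  set y := Classical.choose (hpart j hj) with hy
  set y' := Classical.choose (hpart j' hj') with hy'
  obtain ⟨hyT, hyi, hyj, hyoff, hyf⟩ := hspec
  obtain ⟨hy'T, hy'i, hy'j, hy'off, hy'f⟩ := hspec'
  have hji : j ≠ i := (Finset.mem_erase.mp hj).1
  have hj'i : j' ≠ i := (Finset.mem_erase.mp hj').1
  have hyy'i : y i = y' i := by
    have hphimap1 : phimap j = y i := by simp only [phimap, dif_pos hj, ← hy]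
    have hphimap2 : phimap j' = y' i := by simp only [phimap, dif_pos hj', ← hy']
    rw [← hphimap1, ← hphimap2, hphi]
  have hkey : Function.update (Function.update y j (x j)) j' (y' j') = y' := by
    funext m
    rcases eq_or_ne m j' with rfl | hmj'
    · rw [Function.update_self]
    · rw [Function.update_of_ne hmj']
      rcases eq_or_ne m j with rfl | hmj
      · rw [Function.update_self]
        exact (hy'off m hji hjj').symm
      · rw [Function.update_of_ne hmj]
        rcases eq_or_ne m i with rfl | hmi
        · exact hyy'i
        · rw [hyoff m hmi hmj, hy'off m hmi hmj']
  have happ := F2 S0 S1 hq hbt y j j' (x j) (y' j') hjj'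
    (Ne.symm hyj)
    (by rw [hyoff j' hj'i (Ne.symm hjj')]; exact hy'j)
    (by rw [hyf]; exact neg_ne_zero.mpr hxf)
  rw [hkey] at happ
  exact happ (by rw [hyf, hy'f])

/-- The counting chain: a nonempty trace on a `d`-dimensional subcube has at
least `d!` points. -/
theorem chain (hq : 3 ≤ q) (hbt : IsSphericalBitrade (hammingGraph q q) S0 S1) :
    ∀ (n : ℕ) (K : Finset (Fin q)) (t : Fin q → Fin q), K.card = n →
    (TQ S0 S1 K t).Nonempty → n ! ≤ (TQ S0 S1 K t).card := by
  intro n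
  induction n with
  | zero =>
    intro K t _ hne
    simpa [Nat.factorial] using Finset.card_pos.mpr hne
  | succ n ih =>
    intro K t hK hne
    have hKne : K.Nonempty := Finset.card_pos.mp (by omega)
    obtain ⟨i, hi⟩ := hKne
    obtain ⟨x, hx⟩ := hne
    set W := (TQ S0 S1 K t).image (fun y => y i) with hWdef
    have hW : n + 1 ≤ W.card := hK ▸ pigeon S0 S1 hq hbt K t i hi x hx
    set g : Fin q → Finset (Fin q → Fin q) :=
      fun v => TQ S0 S1 (K.erase i) (Function.update t i v) with hgdef
    have hsub : ∀ v ∈ W, g v ⊆ TQ S0 S1 K t := by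
      intro v _ y hy
      obtain ⟨hyf, hyQ⟩ := (mem_TQ S0 S1).mp hy
      rw [mem_TQ]
      refine ⟨hyf, fun k hk => ?_⟩
      have hki : k ≠ i := fun h => hk (h ▸ hi)
      have := hyQ k (fun hmem => hk (Finset.mem_of_mem_erase hmem))
      rwa [Function.update_of_ne hki] at this
    have hne2 : ∀ v ∈ W, (g v).Nonempty := by
      intro v hv
      obtain ⟨y, hy, hyi⟩ := Finset.mem_image.mp hv
      obtain ⟨hyf, hyQ⟩ := (mem_TQ S0 S1).mp hy
      refine ⟨y, (mem_TQ S0 S1).mpr ⟨hyf, fun k hk => ?_⟩⟩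
      rcases eq_or_ne k i with rfl | hki
      · rw [Function.update_self]; exact hyi
      · rw [Function.update_of_ne hki]
        exact hyQ k (fun hmem => hk (Finset.mem_erase.mpr ⟨hki, hmem⟩))
    have hdisj : ∀ v ∈ W, ∀ v' ∈ W, v ≠ v' → Disjoint (g v) (g v') := by
      intro v _ v' _ hvv'
      rw [Finset.disjoint_left]
      intro y hy hy'
      obtain ⟨-, hyQ⟩ := (mem_TQ S0 S1).mp hy
      obtain ⟨-, hy'Q⟩ := (mem_TQ S0 S1).mp hy'
      have h1 := hyQ i (Finset.notMem_erase i K)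
      have h2 := hy'Q i (Finset.notMem_erase i K)
      rw [Function.update_self] at h1 h2
      exact hvv' (h1 ▸ h2 ▸ rfl)
    have hcard : ∀ v ∈ W, n ! ≤ (g v).card := by
      intro v hv
      exact ih (K.erase i) (Function.update t i v)
        (by rw [Finset.card_erase_of_mem hi, hK]; rfl) (hne2 v hv)
    calc (n + 1)! = (n + 1) * n ! := rfl
      _ ≤ W.card * n ! := Nat.mul_le_mul_right _ hW
      _ = ∑ _v ∈ W, n ! := by rw [Finset.sum_const, smul_eq_mul]
      _ ≤ ∑ v ∈ W, (g v).card := Finset.sum_le_sum hcard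
      _ = (W.biUnion g).card := (Finset.card_biUnion hdisj).symm
      _ ≤ (TQ S0 S1 K t).card := Finset.card_le_card (fun y hy => by
          obtain ⟨v, hv, hyv⟩ := Finset.mem_biUnion.mp hy
          exact hsub v hv hyv)

/-- The total signed sum vanishes. -/
theorem sum_ff_zero (hq : 3 ≤ q) (hbt : IsSphericalBitrade (hammingGraph q q) S0 S1) :
    ∑ x : Fin q → Fin q, ff S0 S1 x = 0 := by
  have hq0 : 0 < q := by omega
  set i : Fin q := ⟨0, by omega⟩ with hidef
  set j : Fin q := ⟨1, by omega⟩ with hjdef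
  have hij : i ≠ j := Fin.ne_of_val_ne (by simp [hidef, hjdef])
  have h1 : ∑ t : Fin q → Fin q, ∑ p : Fin q × Fin q,
      ff S0 S1 (Function.update (Function.update t i p.1) j p.2) = 0 :=
    Finset.sum_eq_zero (fun t _ => balance S0 S1 hq0 hbt i j hij t)
  have h2 : ∑ t : Fin q → Fin q, ∑ p : Fin q × Fin q,
      ff S0 S1 (Function.update (Function.update t i p.1) j p.2)
      = (q : ℤ) * ((q : ℤ) * ∑ x : Fin q → Fin q, ff S0 S1 x) := by
    calc ∑ t : Fin q → Fin q, ∑ p : Fin q × Fin q,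
        ff S0 S1 (Function.update (Function.update t i p.1) j p.2)
        = ∑ t : Fin q → Fin q, ∑ a : Fin q, ∑ b : Fin q,
            ff S0 S1 (Function.update (Function.update t i a) j b) :=
          Finset.sum_congr rfl (fun t _ => by rw [Fintype.sum_prod_type])
      _ = ∑ a : Fin q, ∑ t : Fin q → Fin q, ∑ b : Fin q,
            ff S0 S1 (Function.update (Function.update t i a) j b) := Finset.sum_comm
      _ = ∑ p : Fin q × (Fin q → Fin q), ∑ b : Fin q,
            ff S0 S1 (Function.update (Function.update p.2 i p.1) j b) := by
          rw [Fintype.sum_prod_type]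
      _ = (q : ℤ) * ∑ s : Fin q → Fin q, ∑ b : Fin q,
            ff S0 S1 (Function.update s j b) :=
          rein2 (fun s => ∑ b : Fin q, ff S0 S1 (Function.update s j b)) i
      _ = (q : ℤ) * ∑ b : Fin q, ∑ s : Fin q → Fin q,
            ff S0 S1 (Function.update s j b) := by rw [Finset.sum_comm]
      _ = (q : ℤ) * ∑ p : Fin q × (Fin q → Fin q),
            ff S0 S1 (Function.update p.2 j p.1) := by
          rw [Fintype.sum_prod_type]
      _ = (q : ℤ) * ((q : ℤ) * ∑ x : Fin q → Fin q, ff S0 S1 x) := by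
          rw [rein2 (ff S0 S1) j]
  have h3 : (q : ℤ) * ((q : ℤ) * ∑ x : Fin q → Fin q, ff S0 S1 x) = 0 := by
    rw [← h2, h1]
  have hqz : (q : ℤ) ≠ 0 := Int.natCast_ne_zero.mpr (by omega)
  rcases mul_eq_zero.mp h3 with h | h
  · exact absurd h hqz
  · rcases mul_eq_zero.mp h with h' | h'
    · exact absurd h' hqz
    · exact h'

end StTrade16

/-- For `q ≥ 3`, every (nonempty) spherical bitrade in `H(q,q)` has volume
at least `q!/2`. -/
theorem statement16 (q : ℕ) (hq : 3 ≤ q) (S0 S1 : Set (Fin q → Fin q))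
    (hbt : IsSphericalBitrade (hammingGraph q q) S0 S1) :
    Nat.factorial q / 2 ≤ S0.ncard := by
  classical
  obtain ⟨hd, ⟨x0, hx0⟩, -, -⟩ := id hbt
  have hq0 : 0 < q := by omega
  have hffx0 : StTrade16.ff S0 S1 x0 ≠ 0 := by
    rw [StTrade16.ff_S0 S0 S1 hd hx0]; norm_num
  have hne : (StTrade16.TQ S0 S1 Finset.univ x0).Nonempty :=
    ⟨x0, (StTrade16.mem_TQ S0 S1).mpr
      ⟨hffx0, fun k hk => absurd (Finset.mem_univ k) hk⟩⟩
  have hchain := StTrade16.chain S0 S1 hq hbt q Finset.univ x0 (Finset.card_fin q) hne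
  have hTQeq : StTrade16.TQ S0 S1 Finset.univ x0
      = Finset.univ.filter (fun y => StTrade16.ff S0 S1 y ≠ 0) := by
    ext y
    rw [StTrade16.mem_TQ, Finset.mem_filter]
    simp
  rw [hTQeq] at hchain
  have hsplit : Finset.univ.filter (fun y => StTrade16.ff S0 S1 y ≠ 0)
      = Finset.univ.filter (fun y => y ∈ S0) ∪ Finset.univ.filter (fun y => y ∈ S1) := by
    rw [← Finset.filter_or]
    apply Finset.filter_congr
    intro y _
    rw [StTrade16.ff_ne_zero_iff S0 S1 hd]
    simp [Set.mem_union]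
  have hdisj : Disjoint (Finset.univ.filter (fun y => y ∈ S0))
      (Finset.univ.filter (fun y => y ∈ S1)) := by
    rw [Finset.disjoint_left]
    intro a ha hb
    simp only [Finset.mem_filter, Finset.mem_univ, true_and] at ha hb
    exact Set.disjoint_left.mp hd ha hb
  rw [hsplit, Finset.card_union_of_disjoint hdisj] at hchain
  have hsum0 := StTrade16.sum_ff_zero S0 S1 hq hbt
  have hcc : ((Finset.univ.filter (fun y => y ∈ S0)).card : ℤ)
      - ((Finset.univ.filter (fun y => y ∈ S1)).card : ℤ) = 0 := by
    rw [← hsum0]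
    unfold StTrade16.ff
    rw [Finset.sum_sub_distrib]
    simp [Finset.sum_boole]
  have hncard : S0.ncard = (Finset.univ.filter (fun y => y ∈ S0)).card := by
    rw [Set.ncard_eq_toFinset_card']
    congr 1
    ext y
    simp
  rw [hncard]
  omega
end
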